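/- arXiv:2403.07409 — 7 statements merged into one kernel-verified Lean document; each statement's English description precedes it below -/
import Mathlib

section
/- Generalized Kraft inequality for ε-lossy encoding with side information: Let α, β, q, ℓ be positive integers and let ε ∈ [0,1] be a real. Put X = (Fin α)^ℓ and Y = (Fin β)^ℓ, and let S be a finite set of cardinality q. Let F : S × X × Y → {0,1}* × S be an arbitrary function (encoder output string and final state), and suppose there exists a decoder D : S × S × Y × {0,1}* → X such that for all s ∈ S, x ∈ X, y ∈ Y, writing F(s,x,y) = (u, s'), the output x̂ = D(s, s', y, u) satisfies Σ_{i=1}^{ℓ} 1{x̂_i ≠ x_i} ≤ εℓ. Then for every fixed y ∈ Y: Σ_{x ∈ X} 2^{−min_{s∈S} |π₁(F(s,x,y))|} ≤ q²·B·(1 + log₂(1 + α^ℓ / (q²·B))), where B = Σ_{j=0}^{⌊εℓ⌋} C(ℓ,j)·(α−1)^j. -/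
open Finset

private lemma fiber_card_le' {ℓ a : ℕ} (z : Fin ℓ → Fin a) (T : Finset (Fin ℓ)) :
    (univ.filter fun x : Fin ℓ → Fin a =>
      (univ.filter fun i => x i ≠ z i) = T).card ≤ (a - 1) ^ T.card := by
  classical
  have hcard : (Fintype.piFinset (fun i : T => (univ : Finset (Fin a)).erase (z i))).card
      = (a - 1) ^ T.card := by
    rw [Fintype.card_piFinset]
    simp [Finset.card_erase_of_mem]
  rw [← hcard]
  apply Finset.card_le_card_of_injOn (fun x => (fun i : T => x i))
  · intro x hx
    simp only [Finset.mem_coe, mem_filter, mem_univ, true_and] at hx ⊢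
    rw [Fintype.mem_piFinset]
    intro i
    have : (i : Fin ℓ) ∈ univ.filter fun j => x j ≠ z j := hx ▸ i.2
    simp only [mem_filter, mem_univ, true_and] at this
    simp [this]
  · intro x hx x' hx' h
    simp only [Finset.mem_coe, mem_filter, mem_univ, true_and] at hx hx'
    funext i
    by_cases hi : i ∈ T
    · exact congrFun h ⟨i, hi⟩
    · have h1 : x i = z i := by
        by_contra hne
        exact hi (hx ▸ (by simp [hne] : i ∈ univ.filter fun j => x j ≠ z j))
      have h2 : x' i = z i := by
        by_contra hne
        exact hi (hx' ▸ (by simp [hne] : i ∈ univ.filter fun j => x' j ≠ z j))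
      rw [h1, h2]

private lemma ball_card_le' {ℓ a : ℕ} (z : Fin ℓ → Fin a) (r : ℕ) :
    (univ.filter fun x : Fin ℓ → Fin a =>
      (univ.filter fun i => x i ≠ z i).card ≤ r).card
      ≤ ∑ j ∈ range (r + 1), ℓ.choose j * (a - 1) ^ j := by
  classical
  set P : Finset (Finset (Fin ℓ)) := univ.powerset.filter (fun T => T.card ≤ r) with hP
  have hmaps : ∀ x ∈ (univ.filter fun x : Fin ℓ → Fin a =>
      (univ.filter fun i => x i ≠ z i).card ≤ r),
      (univ.filter fun i => x i ≠ z i) ∈ P := by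
    intro x hx
    simp only [mem_filter, mem_univ, true_and] at hx
    simp [hP, hx]
  rw [Finset.card_eq_sum_card_fiberwise hmaps]
  calc ∑ T ∈ P, (( (univ.filter fun x : Fin ℓ → Fin a =>
          (univ.filter fun i => x i ≠ z i).card ≤ r)).filter
            (fun x => (univ.filter fun i => x i ≠ z i) = T)).card
      ≤ ∑ T ∈ P, (a - 1) ^ T.card := by
        apply Finset.sum_le_sum
        intro T _
        refine le_trans (Finset.card_le_card ?_) (fiber_card_le' z T)
        intro x hx
        simp only [mem_filter, mem_univ, true_and] at hx ⊢
        exact hx.2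
    _ = ∑ j ∈ range (r + 1), ∑ T ∈ univ.powersetCard j, (a - 1) ^ T.card := by
        rw [← Finset.sum_biUnion (s := range (r+1))
          (t := fun j => (univ : Finset (Fin ℓ)).powersetCard j)]
        · congr 1
          ext T
          simp only [hP, mem_biUnion, mem_range, Finset.mem_powersetCard, mem_filter,
            mem_powerset, Nat.lt_succ_iff]
          constructor
          · rintro ⟨hsub, hcard⟩; exact ⟨T.card, hcard, hsub, rfl⟩
          · rintro ⟨j, hj, hsub, rfl⟩; exact ⟨hsub, hj⟩
        · intro i _ j _ hij
          simp only [Finset.disjoint_left]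
          intro T hT hT'
          rw [Finset.mem_powersetCard] at hT hT'
          exact hij (hT.2 ▸ hT'.2 ▸ rfl)
    _ = ∑ j ∈ range (r + 1), ℓ.choose j * (a - 1) ^ j := by
        apply Finset.sum_congr rfl
        intro j _
        rw [Finset.sum_congr rfl (fun T hT => by
          rw [(Finset.mem_powersetCard.mp hT).2]), Finset.sum_const,
          Finset.card_powersetCard, Finset.card_univ, smul_eq_mul]
        simp

private lemma kraft_count' (K N : ℝ) (hK : 0 < K) (hN : 0 < N) (M : ℕ) (c : ℕ → ℝ)
    (hc0 : ∀ n, 0 ≤ c n) (hcK : ∀ n, c n ≤ K * 2 ^ n)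
    (hsum : ∑ n ∈ range (M + 1), c n = N) :
    ∑ n ∈ range (M + 1), c n * (2:ℝ) ^ (-(n:ℤ)) ≤ K * (1 + Real.logb 2 (1 + N / K)) := by
  set t : ℝ := Real.logb 2 (1 + N / K) with ht
  have ht0 : 0 ≤ t := Real.logb_nonneg one_lt_two
    (by have := div_nonneg hN.le hK.le; linarith)
  set m : ℕ := ⌊t⌋₊ with hm
  have hmt : (m : ℝ) ≤ t := Nat.floor_le ht0
  have h2t : (2:ℝ) ^ t = 1 + N / K := by
    rw [ht]
    exact Real.rpow_logb (by norm_num) (by norm_num) (by positivity)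
  have hKN : K + N ≤ K * 2 ^ (m + 1) := by
    have h1 : (1 + N / K) ≤ (2:ℝ) ^ (m + 1) := by
      rw [← h2t]
      calc (2:ℝ) ^ t ≤ (2:ℝ) ^ ((m + 1 : ℕ) : ℝ) :=
            Real.rpow_le_rpow_of_exponent_le one_le_two
              (le_of_lt (by exact_mod_cast Nat.lt_succ_floor t))
        _ = (2:ℝ) ^ (m + 1) := by
            rw [Real.rpow_natCast]
    calc K + N = K * (1 + N / K) := by field_simp
      _ ≤ K * 2 ^ (m + 1) := by nlinarith
  set d : ℕ → ℝ := fun n => max 0 (1 - (2:ℝ) ^ n * (2:ℝ) ^ (-(m:ℤ))) with hd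
  have hd0 : ∀ n, 0 ≤ d n := fun n => le_max_left _ _
  have hmono : ∀ {i j : ℕ}, i ≤ j → (2:ℝ) ^ (-(j:ℤ)) ≤ (2:ℝ) ^ (-(i:ℤ)) := by
    intro i j hij
    apply zpow_le_zpow_right₀ one_le_two
    omega
  have hcancel : ∀ n : ℕ, (2:ℝ) ^ n * (2:ℝ) ^ (-(n:ℤ)) = 1 := by
    intro n
    rw [← zpow_natCast (2:ℝ) n, ← zpow_add₀ (by norm_num : (2:ℝ) ≠ 0)]
    simp
  have hperterm : ∀ n, c n * (2:ℝ) ^ (-(n:ℤ)) ≤ K * d n + c n * (2:ℝ) ^ (-(m:ℤ)) := by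
    intro n
    by_cases h : n ≤ m
    · have hle : (2:ℝ) ^ n * (2:ℝ) ^ (-(m:ℤ)) ≤ 1 := by
        calc (2:ℝ) ^ n * (2:ℝ) ^ (-(m:ℤ)) ≤ (2:ℝ) ^ n * (2:ℝ) ^ (-(n:ℤ)) := by
              have := hmono h
              nlinarith [pow_pos (by norm_num : (0:ℝ) < 2) n]
          _ = 1 := hcancel n
      have hdn : d n = 1 - (2:ℝ) ^ n * (2:ℝ) ^ (-(m:ℤ)) := max_eq_right (by linarith)
      have hfac : (0:ℝ) ≤ (2:ℝ) ^ (-(n:ℤ)) - (2:ℝ) ^ (-(m:ℤ)) := by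
        have := hmono h; linarith
      have hmul : c n * ((2:ℝ) ^ (-(n:ℤ)) - (2:ℝ) ^ (-(m:ℤ)))
          ≤ K * 2 ^ n * ((2:ℝ) ^ (-(n:ℤ)) - (2:ℝ) ^ (-(m:ℤ))) :=
        mul_le_mul_of_nonneg_right (hcK n) hfac
      have hexp : K * 2 ^ n * ((2:ℝ) ^ (-(n:ℤ)) - (2:ℝ) ^ (-(m:ℤ))) = K * d n := by
        rw [hdn]; linear_combination K * hcancel n
      nlinarith
    · push_neg at h
      have hdn : d n = 0 := max_eq_left (by
        have h1 : (2:ℝ) ^ m * (2:ℝ) ^ (-(m:ℤ)) ≤ (2:ℝ) ^ n * (2:ℝ) ^ (-(m:ℤ)) := by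
          have : (2:ℝ) ^ m ≤ 2 ^ n := pow_le_pow_right₀ one_le_two (le_of_lt h)
          nlinarith [zpow_pos (by norm_num : (0:ℝ) < 2) (-(m:ℤ))]
        rw [hcancel m] at h1
        linarith)
      rw [hdn]
      have := hmono (le_of_lt h)
      nlinarith [hc0 n]
  have hdsum : ∑ n ∈ range (M + 1), d n ≤ (m : ℝ) - 1 + (2:ℝ) ^ (-(m:ℤ)) := by
    have hzero : ∀ n ∈ range (M + 1), d n ≠ 0 → n < m := by
      intro n _ hne
      by_contra hge
      push_neg at hge
      apply hne
      apply max_eq_left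
      have h1 : (2:ℝ) ^ m ≤ 2 ^ n := pow_le_pow_right₀ one_le_two hge
      nlinarith [zpow_pos (by norm_num : (0:ℝ) < 2) (-(m:ℤ)), hcancel m]
    calc ∑ n ∈ range (M + 1), d n
        = ∑ n ∈ (range (M + 1)).filter (fun n => n < m), d n :=
          (Finset.sum_filter_of_ne hzero).symm
      _ ≤ ∑ n ∈ range m, d n := by
          apply Finset.sum_le_sum_of_subset_of_nonneg
          · intro n hn
            rw [mem_filter] at hn
            exact mem_range.mpr hn.2
          · intro n _ _; exact hd0 n
      _ = ∑ n ∈ range m, (1 - (2:ℝ) ^ n * (2:ℝ) ^ (-(m:ℤ))) := by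
          apply Finset.sum_congr rfl
          intro n hn
          rw [mem_range] at hn
          apply max_eq_right
          have hle : (2:ℝ) ^ n * (2:ℝ) ^ (-(m:ℤ)) ≤ 1 := by
            have h1 : (2:ℝ) ^ n ≤ 2 ^ m := pow_le_pow_right₀ one_le_two (le_of_lt hn)
            nlinarith [zpow_pos (by norm_num : (0:ℝ) < 2) (-(m:ℤ)), hcancel m]
          linarith
      _ = (m : ℝ) - 1 + (2:ℝ) ^ (-(m:ℤ)) := by
          rw [Finset.sum_sub_distrib, Finset.sum_const, ← Finset.sum_mul]
          have hgeom : ∑ n ∈ range m, (2:ℝ) ^ n = 2 ^ m - 1 := by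
            have := geom_sum_eq (by norm_num : (2:ℝ) ≠ 1) m
            rw [this]; norm_num
          rw [hgeom, sub_mul, hcancel m]
          simp
          ring
  have hfinal : ∑ n ∈ range (M + 1), c n * (2:ℝ) ^ (-(n:ℤ)) ≤ K * ((m:ℝ) + 1) := by
    calc ∑ n ∈ range (M + 1), c n * (2:ℝ) ^ (-(n:ℤ))
        ≤ ∑ n ∈ range (M + 1), (K * d n + c n * (2:ℝ) ^ (-(m:ℤ))) :=
          Finset.sum_le_sum fun n _ => hperterm n
      _ = K * (∑ n ∈ range (M + 1), d n)
          + (∑ n ∈ range (M + 1), c n) * (2:ℝ) ^ (-(m:ℤ)) := by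
          rw [Finset.sum_add_distrib, ← Finset.mul_sum, ← Finset.sum_mul]
      _ ≤ K * ((m : ℝ) - 1 + (2:ℝ) ^ (-(m:ℤ))) + N * (2:ℝ) ^ (-(m:ℤ)) := by
          rw [hsum]
          have := hdsum
          nlinarith [zpow_pos (by norm_num : (0:ℝ) < 2) (-(m:ℤ))]
      _ = K * (m:ℝ) - K + (K + N) * (2:ℝ) ^ (-(m:ℤ)) := by ring
      _ ≤ K * (m:ℝ) - K + (K * 2 ^ (m + 1)) * (2:ℝ) ^ (-(m:ℤ)) := by
          have hz := zpow_pos (by norm_num : (0:ℝ) < 2) (-(m:ℤ))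
          nlinarith
      _ = K * ((m:ℝ) + 1) := by
          have : (2:ℝ) ^ (m + 1) * (2:ℝ) ^ (-(m:ℤ)) = 2 := by
            rw [pow_succ]
            rw [mul_comm ((2:ℝ)^m) 2, mul_assoc, hcancel m]
            norm_num
          nlinarith
  calc ∑ n ∈ range (M + 1), c n * (2:ℝ) ^ (-(n:ℤ)) ≤ K * ((m:ℝ) + 1) := hfinal
    _ ≤ K * (1 + t) := by nlinarith


/-- Generalized Kraft inequality for ε-lossy encoding with side information:
if a decoder can recover `x` within Hamming distortion `ε·ℓ` from the side
information `y`, the initial and final states, and the encoder output, then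
for every fixed `y` the code lengths (minimized over initial states) satisfy
a Kraft-type inequality with slack `q²·B·(1 + log₂(1 + α^ℓ/(q²·B)))`, where
`B` is the size of the Hamming ball of radius `⌊ε·ℓ⌋`. -/
theorem generalized_kraft_lossy_side_info (α q ℓ : ℕ) (β : ℕ)
    (hα : 1 ≤ α) (hβ : 1 ≤ β) (hq : 1 ≤ q) (hℓ : 1 ≤ ℓ)
    (ε : ℝ) (hε0 : 0 ≤ ε) (hε1 : ε ≤ 1)
    (S : Type*) [Fintype S] (hS : Fintype.card S = q)
    (F : S × (Fin ℓ → Fin α) × (Fin ℓ → Fin β) → List Bool × S)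
    (D : S × S × (Fin ℓ → Fin β) × List Bool → (Fin ℓ → Fin α))
    (hD : ∀ (s : S) (x : Fin ℓ → Fin α) (y : Fin ℓ → Fin β),
      ((Finset.univ.filter fun i : Fin ℓ =>
          D (s, (F (s, x, y)).2, y, (F (s, x, y)).1) i ≠ x i).card : ℝ) ≤ ε * ℓ)
    (B : ℝ)
    (hB : B = ∑ j ∈ Finset.range (⌊ε * (ℓ : ℝ)⌋₊ + 1),
      (ℓ.choose j : ℝ) * ((α : ℝ) - 1) ^ j) :
    ∀ y : Fin ℓ → Fin β,
      ∑ x : Fin ℓ → Fin α,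
          (2 : ℝ) ^ (-((⨅ s : S, (F (s, x, y)).1.length : ℕ) : ℤ)) ≤
        (q : ℝ) ^ 2 * B *
          (1 + Real.logb 2 (1 + (α : ℝ) ^ ℓ / ((q : ℝ) ^ 2 * B))) := by
  intro y
  classical
  have hSne : Nonempty S := Fintype.card_pos_iff.mp (by rw [hS]; omega)
  set r : ℕ := ⌊ε * (ℓ : ℝ)⌋₊ with hr
  set Bn : ℕ := ∑ j ∈ range (r + 1), ℓ.choose j * (α - 1) ^ j with hBn
  have hBcast : B = (Bn : ℝ) := by
    rw [hB, hBn]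
    push_cast [Nat.cast_sub hα]
    ring
  have hBn1 : 1 ≤ Bn := by
    have := Finset.single_le_sum (f := fun j => ℓ.choose j * (α - 1) ^ j)
      (fun i _ => Nat.zero_le _) (mem_range.mpr (Nat.succ_pos r))
    simpa using this
  set L : (Fin ℓ → Fin α) → ℕ := fun x => ⨅ s : S, (F (s, x, y)).1.length with hL
  have hLmem : ∀ x, ∃ s, (F (s, x, y)).1.length = L x := by
    intro x
    obtain ⟨s, hs⟩ := Nat.sInf_mem (Set.range_nonempty (fun s : S => (F (s, x, y)).1.length))
    exact ⟨s, hs⟩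
  choose sel hsel using hLmem
  -- the per-length counting bound
  have hcount : ∀ n : ℕ,
      (univ.filter fun x : Fin ℓ → Fin α => L x = n).card ≤ Bn * (q * q * 2 ^ n) := by
    intro n
    have hcard_t : ((univ : Finset (S × S × (Fin n → Bool)))).card = q * q * 2 ^ n := by
      rw [Finset.card_univ]
      simp [Fintype.card_fun, hS, mul_assoc]
    rw [← hcard_t]
    apply Finset.card_le_mul_card_image_of_maps_to
      (f := fun x : Fin ℓ → Fin α =>
        ((sel x, (F (sel x, x, y)).2,
          fun i : Fin n => (F (sel x, x, y)).1.getD i false) : S × S × (Fin n → Bool)))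
      (fun a _ => mem_univ _)
    rintro ⟨s, s', v⟩ _
    set u : List Bool := List.ofFn v with hu
    set z : Fin ℓ → Fin α := D (s, s', y, u) with hz
    refine le_trans (Finset.card_le_card ?_)
      (le_trans (ball_card_le' z r) (le_of_eq hBn.symm))
    intro x hx
    simp only [mem_filter, mem_univ, true_and] at hx
    obtain ⟨hLx, hgx⟩ := hx
    have hsx : sel x = s := congrArg Prod.fst hgx
    have hs'x : (F (sel x, x, y)).2 = s' := congrArg (fun p => p.2.1) hgx
    have hvx : (fun i : Fin n => (F (sel x, x, y)).1.getD i false) = v :=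
      congrArg (fun p => p.2.2) hgx
    have hlen : (F (sel x, x, y)).1.length = n := by rw [hsel x, hLx]
    have hux : (F (sel x, x, y)).1 = u := by
      apply List.ext_getElem (by rw [hlen, hu, List.length_ofFn])
      intro i h1 h2
      have hi : i < n := by rwa [hlen] at h1
      have := congrFun hvx ⟨i, hi⟩
      rw [List.getD_eq_getElem _ _ h1] at this
      rw [this]
      show v ⟨i, hi⟩ = (List.ofFn v)[i]'(by simpa using hi)
      simp [List.getElem_ofFn]
    have hF : F (s, x, y) = (u, s') := by
      rw [← hsx]
      exact Prod.ext hux hs'x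
    have hDx := hD s x y
    rw [hF] at hDx
    simp only [mem_filter, mem_univ, true_and]
    have hcard_le : (univ.filter fun i : Fin ℓ => z i ≠ x i).card ≤ r :=
      Nat.le_floor hDx
    have heq : (univ.filter fun i : Fin ℓ => x i ≠ z i)
        = (univ.filter fun i : Fin ℓ => z i ≠ x i) := by
      apply Finset.filter_congr
      intro i _
      simp [ne_comm]
    rw [heq]
    exact hcard_le
  -- pass to the real-valued sum
  set M : ℕ := univ.sup L with hM
  have hmaps : ∀ x : Fin ℓ → Fin α, x ∈ (univ : Finset (Fin ℓ → Fin α)) →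
      L x ∈ range (M + 1) := fun x _ =>
    mem_range.mpr (Nat.lt_succ_of_le (Finset.le_sup (mem_univ x)))
  have hrw : ∑ x : Fin ℓ → Fin α, (2:ℝ) ^ (-(L x : ℤ))
      = ∑ n ∈ range (M + 1),
          ((univ.filter fun x : Fin ℓ → Fin α => L x = n).card : ℝ) * (2:ℝ) ^ (-(n:ℤ)) := by
    rw [← Finset.sum_fiberwise_of_maps_to hmaps (fun x => (2:ℝ) ^ (-(L x : ℤ)))]
    apply Finset.sum_congr rfl
    intro n _
    rw [Finset.sum_congr rfl (fun x hx => by rw [(mem_filter.mp hx).2])]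
    rw [Finset.sum_const, nsmul_eq_mul]
  have hsumcard : ∑ n ∈ range (M + 1),
      ((univ.filter fun x : Fin ℓ → Fin α => L x = n).card : ℝ) = (α:ℝ) ^ ℓ := by
    have h1 := Finset.card_eq_sum_card_fiberwise hmaps
    have h2 : (univ : Finset (Fin ℓ → Fin α)).card = α ^ ℓ := by
      rw [Finset.card_univ]; simp [Fintype.card_fun]
    rw [h2] at h1
    exact_mod_cast congrArg (Nat.cast : ℕ → ℝ) h1.symm
  have hK : (0:ℝ) < (q:ℝ) ^ 2 * B := by
    rw [hBcast]
    have h1 : (1:ℝ) ≤ (Bn:ℝ) := by exact_mod_cast hBn1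
    have h2 : (1:ℝ) ≤ (q:ℝ) := by exact_mod_cast hq
    nlinarith
  have hN : (0:ℝ) < (α:ℝ) ^ ℓ := by
    have : (1:ℝ) ≤ (α:ℝ) := by exact_mod_cast hα
    positivity
  have hcK : ∀ n, ((univ.filter fun x : Fin ℓ → Fin α => L x = n).card : ℝ)
      ≤ ((q:ℝ) ^ 2 * B) * 2 ^ n := by
    intro n
    have h1 : ((univ.filter fun x : Fin ℓ → Fin α => L x = n).card : ℝ)
        ≤ ((Bn * (q * q * 2 ^ n) : ℕ) : ℝ) := by exact_mod_cast hcount n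
    refine le_trans h1 (le_of_eq ?_)
    rw [hBcast]
    push_cast
    ring
  show ∑ x : Fin ℓ → Fin α, (2:ℝ) ^ (-(L x : ℤ)) ≤ _
  rw [hrw]
  exact kraft_count' ((q:ℝ)^2 * B) ((α:ℝ)^ℓ) hK hN M _
    (fun n => Nat.cast_nonneg _) hcK hsumcard
end

section
/- Core combinatorial optimization behind the generalized Kraft inequality: Let M > 0 and N > 0 be real numbers, let J be a natural number, and let k_0, k_1, …, k_J be nonnegative reals satisfying k_j ≤ M·2^j for every j and Σ_{j=0}^{J} k_j = N. Then Σ_{j=0}^{J} k_j·2^{−j} ≤ M·(1 + log₂(1 + N/M)). -/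
set_option maxHeartbeats 1000000 in

/-- Core combinatorial optimization behind the generalized Kraft inequality. -/
theorem kraft_core_optimization (M N : ℝ) (hM : 0 < M) (hN : 0 < N) (J : ℕ)
    (k : ℕ → ℝ) (hk0 : ∀ j ≤ J, 0 ≤ k j) (hkM : ∀ j ≤ J, k j ≤ M * 2 ^ j)
    (hsum : ∑ j ∈ Finset.range (J + 1), k j = N) :
    ∑ j ∈ Finset.range (J + 1), k j * (2 : ℝ) ^ (-(j : ℤ)) ≤
      M * (1 + Real.logb 2 (1 + N / M)) := by
  set y : ℝ := 1 + N / M with hy_def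
  have hy1 : 1 < y := by
    have : 0 < N / M := div_pos hN hM
    simp [hy_def]; linarith
  have hy0 : 0 < y := by linarith
  set m : ℕ := ⌊Real.logb 2 y⌋₊ with hm_def
  set c : ℝ := (2 : ℝ) ^ (-(m : ℤ)) with hc_def
  have hc_pos : 0 < c := by positivity
  have hcm : c * (2 : ℝ) ^ m = 1 := by
    rw [hc_def, ← zpow_natCast (2 : ℝ) m, ← zpow_add₀ (two_ne_zero)]
    simp
  -- floor bounds
  have hlogb_nonneg : 0 ≤ Real.logb 2 y := Real.logb_nonneg one_lt_two (le_of_lt hy1)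
  have hm_le : (m : ℝ) ≤ Real.logb 2 y := Nat.floor_le hlogb_nonneg
  have hm_lt : Real.logb 2 y < (m : ℝ) + 1 := Nat.lt_floor_add_one _
  have hy_lt : y < (2 : ℝ) ^ (m + 1) := by
    have h1 : y = (2 : ℝ) ^ (Real.logb 2 y) := (Real.rpow_logb two_pos (by norm_num) hy0).symm
    have h2 : (2 : ℝ) ^ (Real.logb 2 y) < (2 : ℝ) ^ (((m : ℝ) + 1) : ℝ) :=
      Real.rpow_lt_rpow_of_exponent_lt one_lt_two hm_lt
    have h3 : (2 : ℝ) ^ (((m : ℝ) + 1) : ℝ) = (2 : ℝ) ^ (m + 1) := by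
      rw [show ((m : ℝ) + 1) = ((m + 1 : ℕ) : ℝ) by push_cast; ring, Real.rpow_natCast]
    rw [h1]; rw [h3] at h2; exact h2
  -- pointwise bound
  have hpoint : ∀ j ∈ Finset.range (J + 1),
      k j * (2 : ℝ) ^ (-(j : ℤ)) ≤
        c * k j + (if j ≤ m then M * (1 - c * 2 ^ j) else 0) := by
    intro j hj
    rw [Finset.mem_range] at hj
    have hjJ : j ≤ J := by omega
    have hk0' := hk0 j hjJ
    have hkM' := hkM j hjJ
    have ej : (2 : ℝ) ^ j * (2 : ℝ) ^ (-(j : ℤ)) = 1 := by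
      rw [← zpow_natCast (2 : ℝ) j, ← zpow_add₀ (two_ne_zero)]
      simp
    by_cases h : j ≤ m
    · simp only [h, if_true]
      have hcj : c ≤ (2 : ℝ) ^ (-(j : ℤ)) := by
        rw [hc_def]
        apply zpow_le_zpow_right₀ one_le_two
        omega
      nlinarith [mul_nonneg (sub_nonneg.2 hkM') (sub_nonneg.2 hcj), pow_pos (two_pos (α := ℝ)) j]
    · simp only [h, if_false, add_zero]
      have hcj : (2 : ℝ) ^ (-(j : ℤ)) ≤ c := by
        rw [hc_def]
        apply zpow_le_zpow_right₀ one_le_two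
        omega
      nlinarith
  have hsum1 : ∑ j ∈ Finset.range (J + 1), k j * (2 : ℝ) ^ (-(j : ℤ)) ≤
      c * N + ∑ j ∈ Finset.range (J + 1), (if j ≤ m then M * (1 - c * 2 ^ j) else 0) := by
    calc ∑ j ∈ Finset.range (J + 1), k j * (2 : ℝ) ^ (-(j : ℤ))
        ≤ ∑ j ∈ Finset.range (J + 1),
            (c * k j + (if j ≤ m then M * (1 - c * 2 ^ j) else 0)) :=
          Finset.sum_le_sum hpoint
      _ = c * N + ∑ j ∈ Finset.range (J + 1), (if j ≤ m then M * (1 - c * 2 ^ j) else 0) := by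
          rw [Finset.sum_add_distrib, ← Finset.mul_sum, hsum]
  have hnonneg : ∀ j ∈ Finset.range (m + 1), 0 ≤ M * (1 - c * 2 ^ j) := by
    intro j hj
    rw [Finset.mem_range] at hj
    have : c * (2 : ℝ) ^ j ≤ c * 2 ^ m := by
      apply mul_le_mul_of_nonneg_left _ (le_of_lt hc_pos)
      exact pow_le_pow_right₀ one_le_two (by omega)
    rw [hcm] at this
    nlinarith
  have hsum2 : ∑ j ∈ Finset.range (J + 1), (if j ≤ m then M * (1 - c * 2 ^ j) else 0) ≤
      ∑ j ∈ Finset.range (m + 1), M * (1 - c * 2 ^ j) := by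
    rw [← Finset.sum_filter]
    apply Finset.sum_le_sum_of_subset_of_nonneg
    · intro x hx
      simp only [Finset.mem_filter, Finset.mem_range] at hx ⊢
      omega
    · intro j hj _
      exact hnonneg j hj
  have hgeom : ∑ j ∈ Finset.range (m + 1), (2 : ℝ) ^ j = 2 ^ (m + 1) - 1 := by
    rw [geom_sum_eq (by norm_num)]
    norm_num
  have hsum3 : ∑ j ∈ Finset.range (m + 1), M * (1 - c * 2 ^ j)
      = M * (m + 1) - M * c * (2 ^ (m + 1) - 1) := by
    have : ∑ j ∈ Finset.range (m + 1), M * (1 - c * 2 ^ j)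
        = ∑ j ∈ Finset.range (m + 1), (M - M * c * 2 ^ j) := by
      apply Finset.sum_congr rfl; intro j _; ring
    rw [this, Finset.sum_sub_distrib, ← Finset.mul_sum, hgeom]
    simp [Finset.sum_const, Finset.card_range]
    ring
  -- combine
  have hMy : M * y = M + N := by
    rw [hy_def]; field_simp
  have hc2 : c * (2 : ℝ) ^ (m + 1) = 2 := by
    rw [pow_succ]
    nlinarith [hcm]
  have hfin : c * N + (M * (m + 1) - M * c * (2 ^ (m + 1) - 1)) ≤
      M * (1 + Real.logb 2 y) := by
    have h1 : c * (M + N) < c * (M * 2 ^ (m + 1)) := by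
      apply mul_lt_mul_of_pos_left _ hc_pos
      calc M + N = M * y := hMy.symm
        _ < M * 2 ^ (m + 1) := by
            apply mul_lt_mul_of_pos_left hy_lt hM
    have h2 : c * (M * 2 ^ (m + 1)) = 2 * M := by
      nlinarith [hc2]
    nlinarith [hm_le]
  calc ∑ j ∈ Finset.range (J + 1), k j * (2 : ℝ) ^ (-(j : ℤ))
      ≤ c * N + ∑ j ∈ Finset.range (J + 1), (if j ≤ m then M * (1 - c * 2 ^ j) else 0) := hsum1
    _ ≤ c * N + ∑ j ∈ Finset.range (m + 1), M * (1 - c * 2 ^ j) := by linarith [hsum2]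
    _ = c * N + (M * (m + 1) - M * c * (2 ^ (m + 1) - 1)) := by rw [hsum3]
    _ ≤ M * (1 + Real.logb 2 y) := hfin
end

section
/- Random-binning error bound with side information (single-source case): Let A be a finite set, x₀ ∈ A, let L : A → ℕ be a lossless length function (|{a ∈ A : L(a) = l}| ≤ 2^l for every natural number l), let M ≥ 1 be an integer, and let T ≥ 0 be a real number. Let φ : A → Fin M be a uniformly random function (i.e., uniformly distributed over all functions from A to {0,…,M−1}). Then the probability that there exists a ∈ A with a ≠ x₀, L(a) ≤ T, and φ(a) = φ(x₀) is at most 2·2^T / M. -/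
open scoped Classical in
/-- Random-binning error bound with side information (single-source case):
the probability, under a uniformly random binning `φ : A → Fin M`, that some
`a ≠ x₀` with `L a ≤ T` falls in the bin of `x₀`, is at most `2 · 2^T / M`. -/
theorem random_binning_error_single (A : Type*) [Fintype A] (x₀ : A) (L : A → ℕ)
    (hL : ∀ l : ℕ, (Finset.univ.filter fun a => L a = l).card ≤ 2 ^ l)
    (M : ℕ) (hM : 1 ≤ M) (T : ℝ) (hT : 0 ≤ T) :
    ((Finset.univ.filter fun φ : A → Fin M =>
        ∃ a : A, a ≠ x₀ ∧ (L a : ℝ) ≤ T ∧ φ a = φ x₀).card : ℝ) /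
      (Fintype.card (A → Fin M)) ≤ 2 * (2 : ℝ) ^ T / M := by
  set S : Finset A := Finset.univ.filter fun a => a ≠ x₀ ∧ (L a : ℝ) ≤ T with hS
  set E : Finset (A → Fin M) := Finset.univ.filter fun φ : A → Fin M =>
      ∃ a : A, a ≠ x₀ ∧ (L a : ℝ) ≤ T ∧ φ a = φ x₀ with hE
  -- each single event has size total / M
  have hEa : ∀ a : A, a ≠ x₀ →
      (Finset.univ.filter fun φ : A → Fin M => φ a = φ x₀).card * M
        = Fintype.card (A → Fin M) := by
    intro a ha
    have hx : x₀ ≠ a := Ne.symm ha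
    have e : {φ : A → Fin M // φ a = φ x₀} × Fin M ≃ (A → Fin M) :=
      { toFun := fun p => Function.update p.1.1 a p.2
        invFun := fun φ => (⟨Function.update φ a (φ x₀), by
            simp [Function.update_self, Function.update_of_ne hx]⟩, φ a)
        left_inv := by
          rintro ⟨⟨ψ, hψ⟩, k⟩
          have h1 : Function.update ψ a k x₀ = ψ x₀ := Function.update_of_ne hx _ _
          refine Prod.ext (Subtype.ext ?_) (Function.update_self a k ψ)
          simp only [h1, Function.update_idem, ← hψ, Function.update_eq_self]
        right_inv := by
          intro φ
          simp only [Function.update_idem, Function.update_self,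
            Function.update_eq_self] }
    have := Fintype.card_congr e
    simpa [Fintype.card_subtype] using this
  -- union bound
  have hsub : E ⊆ S.biUnion (fun a => Finset.univ.filter fun φ : A → Fin M => φ a = φ x₀) := by
    intro φ hφ
    rw [hE, Finset.mem_filter] at hφ
    obtain ⟨-, a, ha, haT, haφ⟩ := hφ
    exact Finset.mem_biUnion.2 ⟨a, Finset.mem_filter.2 ⟨Finset.mem_univ _, ha, haT⟩,
      Finset.mem_filter.2 ⟨Finset.mem_univ _, haφ⟩⟩
  have hcard : E.card * M ≤ S.card * Fintype.card (A → Fin M) := by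
    calc E.card * M ≤ (S.biUnion (fun a => Finset.univ.filter
          fun φ : A → Fin M => φ a = φ x₀)).card * M :=
        Nat.mul_le_mul_right _ (Finset.card_le_card hsub)
      _ ≤ (∑ a ∈ S, (Finset.univ.filter fun φ : A → Fin M => φ a = φ x₀).card) * M :=
        Nat.mul_le_mul_right _ (Finset.card_biUnion_le)
      _ = ∑ a ∈ S, (Finset.univ.filter fun φ : A → Fin M => φ a = φ x₀).card * M := by
        rw [Finset.sum_mul]
      _ = ∑ a ∈ S, Fintype.card (A → Fin M) := by
        refine Finset.sum_congr rfl fun a haS => ?_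
        exact hEa a (Finset.mem_filter.1 haS).2.1
      _ = S.card * Fintype.card (A → Fin M) := by
        rw [Finset.sum_const, smul_eq_mul]
  -- bound on |S|
  set N : ℕ := ⌊T⌋₊ with hN
  have hSsub : S ⊆ (Finset.range (N + 1)).biUnion
      (fun l => Finset.univ.filter fun a => L a = l) := by
    intro a haS
    obtain ⟨-, -, haT⟩ := Finset.mem_filter.1 haS
    have : L a ≤ N := Nat.le_floor haT
    exact Finset.mem_biUnion.2 ⟨L a, Finset.mem_range.2 (Nat.lt_succ_of_le this),
      Finset.mem_filter.2 ⟨Finset.mem_univ _, rfl⟩⟩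
  have hgeom : ∀ n : ℕ, ∑ l ∈ Finset.range n, 2 ^ l < 2 ^ n := by
    intro n
    induction n with
    | zero => simp
    | succ n ih =>
      rw [Finset.sum_range_succ, pow_succ]
      omega
  have hScard : S.card ≤ 2 ^ (N + 1) := by
    calc S.card ≤ ((Finset.range (N + 1)).biUnion
          (fun l => Finset.univ.filter fun a => L a = l)).card :=
        Finset.card_le_card hSsub
      _ ≤ ∑ l ∈ Finset.range (N + 1), (Finset.univ.filter fun a => L a = l).card :=
        Finset.card_biUnion_le
      _ ≤ ∑ l ∈ Finset.range (N + 1), 2 ^ l := Finset.sum_le_sum fun l _ => hL l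
      _ ≤ 2 ^ (N + 1) := (hgeom (N + 1)).le
  have hSreal : (S.card : ℝ) ≤ 2 * (2 : ℝ) ^ T := by
    have h1 : (S.card : ℝ) ≤ (2 : ℝ) ^ (N + 1) := by
      exact_mod_cast Nat.cast_le.2 hScard |>.trans_eq (by push_cast; ring)
    have h2 : ((2 : ℝ) ^ N : ℝ) ≤ (2 : ℝ) ^ T := by
      rw [← Real.rpow_natCast 2 N]
      exact Real.rpow_le_rpow_of_exponent_le one_le_two (Nat.floor_le hT)
    calc (S.card : ℝ) ≤ (2 : ℝ) ^ (N + 1) := h1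
      _ = 2 * (2 : ℝ) ^ N := by ring
      _ ≤ 2 * (2 : ℝ) ^ T := by linarith
  -- finish
  have hMpos : (0 : ℝ) < (M : ℝ) := by exact_mod_cast hM
  have htot : (0 : ℝ) < (Fintype.card (A → Fin M) : ℝ) := by
    have : 0 < Fintype.card (A → Fin M) := by
      simp [Fintype.card_fun, Fintype.card_fin]
      positivity
    exact_mod_cast this
  rw [div_le_div_iff₀ htot hMpos]
  have hc : (E.card : ℝ) * M ≤ (S.card : ℝ) * Fintype.card (A → Fin M) := by
    exact_mod_cast hcard
  calc (E.card : ℝ) * M ≤ (S.card : ℝ) * Fintype.card (A → Fin M) := hc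
    _ ≤ (2 * (2 : ℝ) ^ T) * Fintype.card (A → Fin M) :=
      mul_le_mul_of_nonneg_right hSreal htot.le
end

section
/- Random-binning error bound (joint case): Let X and Y be finite sets, (x₀,y₀) ∈ X × Y, and let L : X × Y → ℕ be a lossless length function (|{(x,y) : L(x,y) = l}| ≤ 2^l for every natural number l). Let M_x, M_y ≥ 1 be integers and T ≥ 0 a real. Let φ_x : X → Fin M_x and φ_y : Y → Fin M_y be independent uniformly random functions. Then the probability that there exists a pair (x̃,ỹ) with x̃ ≠ x₀, ỹ ≠ y₀, L(x̃,ỹ) ≤ T, φ_x(x̃) = φ_x(x₀), and φ_y(ỹ) = φ_y(y₀) is at most 2·2^T / (M_x·M_y). -/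
open scoped Classical in
lemma collision_count {α : Type*} [Fintype α] (M : ℕ) {x x₀ : α} (hx : x ≠ x₀) :
    (Finset.univ.filter fun f : α → Fin M => f x = f x₀).card * M = M ^ Fintype.card α := by
  classical
  have h := Finset.card_bij'
    (s := (Finset.univ.filter fun f : α → Fin M => f x = f x₀) ×ˢ (Finset.univ : Finset (Fin M)))
    (t := (Finset.univ : Finset (α → Fin M)))
    (i := fun p _ => Function.update p.1 x₀ p.2)
    (j := fun g _ => (Function.update g x₀ (g x), g x₀))
    (fun _ _ => Finset.mem_univ _)
    (fun g _ => by
      simp only [Finset.mem_product, Finset.mem_filter, Finset.mem_univ, true_and]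
      refine ⟨?_, trivial⟩
      rw [Function.update_of_ne hx, Function.update_self])
    (fun p hp => by
      obtain ⟨f, c⟩ := p
      simp only [Finset.mem_product, Finset.mem_filter, Finset.mem_univ, true_and] at hp
      have hf : f x = f x₀ := hp.1
      ext1
      · simp only
        rw [Function.update_of_ne hx, Function.update_idem, hf, Function.update_eq_self]
      · simp only
        rw [Function.update_self])
    (fun g _ => by
      simp only
      rw [Function.update_idem, Function.update_eq_self])
  simpa [Finset.card_product, Fintype.card_fun] using h

open scoped Classical in
/-- Random-binning error bound (joint case): under independent uniformly random
binnings `φ_x : X → Fin M_x` and `φ_y : Y → Fin M_y` (jointly uniform over the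
product of the two function spaces), the probability that some pair `(x̃, ỹ)`
with `x̃ ≠ x₀`, `ỹ ≠ y₀` and `L (x̃, ỹ) ≤ T` collides with `(x₀, y₀)` in both
bins is at most `2 · 2^T / (M_x · M_y)`. -/
theorem random_binning_error_joint (X Y : Type*) [Fintype X] [Fintype Y]
    (x₀ : X) (y₀ : Y) (L : X × Y → ℕ)
    (hL : ∀ l : ℕ, (Finset.univ.filter fun p : X × Y => L p = l).card ≤ 2 ^ l)
    (Mx My : ℕ) (hMx : 1 ≤ Mx) (hMy : 1 ≤ My) (T : ℝ) (hT : 0 ≤ T) :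
    ((Finset.univ.filter fun φ : (X → Fin Mx) × (Y → Fin My) =>
        ∃ x : X, ∃ y : Y, x ≠ x₀ ∧ y ≠ y₀ ∧ (L (x, y) : ℝ) ≤ T ∧
          φ.1 x = φ.1 x₀ ∧ φ.2 y = φ.2 y₀).card : ℝ) /
      (Fintype.card ((X → Fin Mx) × (Y → Fin My))) ≤
      2 * (2 : ℝ) ^ T / ((Mx : ℝ) * My) := by
  classical
  set n := Nat.floor T with hn
  set S := (Finset.univ.filter fun φ : (X → Fin Mx) × (Y → Fin My) =>
        ∃ x : X, ∃ y : Y, x ≠ x₀ ∧ y ≠ y₀ ∧ (L (x, y) : ℝ) ≤ T ∧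
          φ.1 x = φ.1 x₀ ∧ φ.2 y = φ.2 y₀) with hSdef
  set P : Finset (X × Y) :=
    Finset.univ.filter fun p : X × Y => p.1 ≠ x₀ ∧ p.2 ≠ y₀ ∧ (L p : ℝ) ≤ T with hPdef
  set E : X × Y → Finset ((X → Fin Mx) × (Y → Fin My)) := fun p =>
    Finset.univ.filter fun φ => φ.1 p.1 = φ.1 x₀ ∧ φ.2 p.2 = φ.2 y₀ with hEdef
  -- union bound
  have hSub : S ⊆ P.biUnion E := by
    intro φ hφ
    simp only [hSdef, Finset.mem_filter, Finset.mem_univ, true_and] at hφ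
    obtain ⟨x, y, hx, hy, hLe, h1, h2⟩ := hφ
    refine Finset.mem_biUnion.2 ⟨(x, y), ?_, ?_⟩
    · simp [hPdef, hx, hy, hLe]
    · simp [hEdef, h1, h2]
  -- size of each collision event
  have hE : ∀ p ∈ P, (E p).card * (Mx * My) = Mx ^ Fintype.card X * My ^ Fintype.card Y := by
    intro p hp
    simp only [hPdef, Finset.mem_filter, Finset.mem_univ, true_and] at hp
    have : E p = (Finset.univ.filter fun f : X → Fin Mx => f p.1 = f x₀) ×ˢ
        (Finset.univ.filter fun g : Y → Fin My => g p.2 = g y₀) := by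
      ext ⟨f, g⟩
      simp [hEdef, Finset.mem_product]
    rw [this, Finset.card_product]
    have h1 := collision_count (α := X) Mx hp.1
    have h2 := collision_count (α := Y) My hp.2.1
    calc _ = ((Finset.univ.filter fun f : X → Fin Mx => f p.1 = f x₀).card * Mx) *
        ((Finset.univ.filter fun g : Y → Fin My => g p.2 = g y₀).card * My) := by ring
    _ = _ := by rw [h1, h2]
  -- union bound on cardinals
  have hS : S.card * (Mx * My) ≤ P.card * (Mx ^ Fintype.card X * My ^ Fintype.card Y) := by
    calc S.card * (Mx * My) ≤ (P.biUnion E).card * (Mx * My) :=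
          Nat.mul_le_mul_right _ (Finset.card_le_card hSub)
    _ ≤ (∑ p ∈ P, (E p).card) * (Mx * My) :=
          Nat.mul_le_mul_right _ (Finset.card_biUnion_le)
    _ = ∑ p ∈ P, (E p).card * (Mx * My) := by rw [Finset.sum_mul]
    _ = ∑ p ∈ P, Mx ^ Fintype.card X * My ^ Fintype.card Y := Finset.sum_congr rfl hE
    _ = _ := by rw [Finset.sum_const, smul_eq_mul]
  -- bound on P.card
  have hP : P.card ≤ 2 ^ (n + 1) := by
    have hsub : P ⊆ Finset.univ.filter fun p : X × Y => L p ≤ n := by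
      intro p hp
      simp only [hPdef, Finset.mem_filter, Finset.mem_univ, true_and] at hp ⊢
      exact Nat.le_floor hp.2.2
    have heq : (Finset.univ.filter fun p : X × Y => L p ≤ n) =
        (Finset.range (n + 1)).biUnion fun l => Finset.univ.filter fun p : X × Y => L p = l := by
      ext p
      simp [Nat.lt_succ_iff]
    calc P.card ≤ (Finset.univ.filter fun p : X × Y => L p ≤ n).card :=
          Finset.card_le_card hsub
    _ ≤ ∑ l ∈ Finset.range (n + 1), (Finset.univ.filter fun p : X × Y => L p = l).card := by
          rw [heq]; exact Finset.card_biUnion_le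
    _ ≤ ∑ l ∈ Finset.range (n + 1), 2 ^ l := Finset.sum_le_sum fun l _ => hL l
    _ = 2 ^ (n + 1) - 1 := by
          induction n with
          | zero => simp
          | succ m ih =>
            rw [Finset.sum_range_succ, ih]
            have : 1 ≤ 2 ^ (m + 1) := Nat.one_le_two_pow
            ring_nf
            omega
    _ ≤ 2 ^ (n + 1) := Nat.sub_le _ _
  -- to the reals
  have hN : (Fintype.card ((X → Fin Mx) × (Y → Fin My)) : ℝ) =
      (Mx : ℝ) ^ Fintype.card X * (My : ℝ) ^ Fintype.card Y := by
    simp [Fintype.card_prod, Fintype.card_fun]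
  have hMx0 : (0 : ℝ) < Mx := by exact_mod_cast hMx
  have hMy0 : (0 : ℝ) < My := by exact_mod_cast hMy
  have hN0 : (0 : ℝ) < (Fintype.card ((X → Fin Mx) × (Y → Fin My)) : ℝ) := by
    rw [hN]; positivity
  rw [div_le_div_iff₀ hN0 (by positivity)]
  have hSR : (S.card : ℝ) * ((Mx : ℝ) * My) ≤
      (P.card : ℝ) * ((Mx : ℝ) ^ Fintype.card X * (My : ℝ) ^ Fintype.card Y) := by
    exact_mod_cast hS
  have hPR : (P.card : ℝ) ≤ 2 * (2 : ℝ) ^ T := by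
    have h1 : (P.card : ℝ) ≤ (2 : ℝ) ^ (n + 1) := by exact_mod_cast hP
    have h2 : ((2 : ℝ) ^ n : ℝ) ≤ (2 : ℝ) ^ T := by
      rw [← Real.rpow_natCast 2 n]
      exact Real.rpow_le_rpow_left_iff (by norm_num) |>.2 (Nat.floor_le hT)
    calc (P.card : ℝ) ≤ (2 : ℝ) ^ (n + 1) := h1
    _ = 2 * (2 : ℝ) ^ n := by ring
    _ ≤ 2 * (2 : ℝ) ^ T := by linarith
  calc (S.card : ℝ) * ((Mx : ℝ) * My) ≤
      (P.card : ℝ) * ((Mx : ℝ) ^ Fintype.card X * (My : ℝ) ^ Fintype.card Y) := hSR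
  _ ≤ (2 * (2 : ℝ) ^ T) * ((Mx : ℝ) ^ Fintype.card X * (My : ℝ) ^ Fintype.card Y) := by
      apply mul_le_mul_of_nonneg_right hPR; positivity
  _ = 2 * (2 : ℝ) ^ T * (Fintype.card ((X → Fin Mx) × (Y → Fin My)) : ℝ) := by rw [hN]
end

section
/- Error bound for the three-part universal minimum-description decoder under random binning: Let X and Y be finite sets, let k ≥ 1 be an integer, and let R_x, R_y, ε₀ > 0 be reals. Let ℓ_J, ℓ_{x|y}, ℓ_{y|x} : X × Y → ℕ satisfy: (i) |{(x,y) : ℓ_J(x,y) = l}| ≤ 2^l for every l; (ii) for every fixed y ∈ Y, |{x : ℓ_{x|y}(x,y) = l}| ≤ 2^l for every l; (iii) for every fixed x ∈ X, |{y : ℓ_{y|x}(x,y) = l}| ≤ 2^l for every l. Define u(x,y) = min{ R_x − ℓ_{x|y}(x,y)/k, R_y − ℓ_{y|x}(x,y)/k, R_x + R_y − ℓ_J(x,y)/k }. Fix (x₀,y₀) ∈ X × Y with u(x₀,y₀) ≥ ε₀, and let M_x, M_y be integers with M_x ≥ 2^{k·R_x} and M_y ≥ 2^{k·R_y}. Let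 φ_x : X → Fin M_x and φ_y : Y → Fin M_y be independent uniformly random functions. Then the probability that there exists (x̃,ỹ) ≠ (x₀,y₀) with φ_x(x̃) = φ_x(x₀), φ_y(ỹ) = φ_y(y₀), and u(x̃,ỹ) ≥ u(x₀,y₀) is at most 6·2^{−k·ε₀}. -/
lemma collision_card {A : Type*} [Fintype A] [DecidableEq A] (M : ℕ) {a b : A} (hab : a ≠ b) :
    (Finset.univ.filter fun f : A → Fin M => f a = f b).card = M ^ (Fintype.card A - 1) := by
  classical
  rw [← Fintype.card_subtype]
  have e : {f : A → Fin M // f a = f b} ≃ ({x : A // x ≠ a} → Fin M) :=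
  { toFun := fun f x => f.1 x.1
    invFun := fun g => ⟨fun x => if h : x = a then g ⟨b, hab.symm⟩ else g ⟨x, h⟩, by
      simp [hab.symm]⟩
    left_inv := fun f => by
      ext x
      by_cases h : x = a
      · subst h; simp [f.2]
      · simp [h]
    right_inv := fun g => by
      ext x
      simp [x.2] }
  rw [Fintype.card_congr e]
  rw [Fintype.card_fun, Fintype.card_fin, Fintype.card_subtype_compl, Fintype.card_subtype_eq]

lemma length_count_bound {A : Type*} [Fintype A] [DecidableEq A] (L : A → ℕ)
    (hL : ∀ l : ℕ, (Finset.univ.filter fun a => L a = l).card ≤ 2 ^ l)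
    (C : ℝ) (hC : 0 ≤ C) (T : Finset A) (hT : ∀ a ∈ T, (L a : ℝ) ≤ C) :
    (T.card : ℝ) ≤ 2 * (2 : ℝ) ^ C := by
  classical
  set n := ⌊C⌋₊ with hn
  have hsub : T ⊆ (Finset.range (n+1)).biUnion
      (fun l => Finset.univ.filter fun a => L a = l) := by
    intro a ha
    simp only [Finset.mem_biUnion, Finset.mem_range, Finset.mem_filter, Finset.mem_univ]
    exact ⟨L a, Nat.lt_succ_of_le (Nat.le_floor (hT a ha)), trivial, rfl⟩
  have h1 : T.card ≤ ∑ l ∈ Finset.range (n+1), 2 ^ l :=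
    le_trans (Finset.card_le_card hsub)
      (le_trans Finset.card_biUnion_le (Finset.sum_le_sum fun l _ => hL l))
  have h2 : (T.card : ℝ) ≤ ∑ l ∈ Finset.range (n+1), (2:ℝ) ^ l := by
    exact_mod_cast h1
  have h3 : ∑ l ∈ Finset.range (n+1), (2:ℝ) ^ l ≤ 2 ^ (n+1) := by
    have := geom_sum_eq (by norm_num : (2:ℝ) ≠ 1) (n+1)
    rw [this]; norm_num
  refine h2.trans (h3.trans ?_)
  have h4 : (2:ℝ) ^ (n+1) = 2 * (2:ℝ) ^ ((n:ℝ)) := by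
    rw [pow_succ, mul_comm, Real.rpow_natCast]
  rw [h4]
  gcongr
  · norm_num
  · exact Nat.floor_le hC

lemma filter_prod_card {α β : Type*} [Fintype α] [Fintype β]
    (P : α → Prop) (Q : β → Prop) [DecidablePred P] [DecidablePred Q] :
    (Finset.univ.filter fun x : α × β => P x.1 ∧ Q x.2).card
      = (Finset.univ.filter P).card * (Finset.univ.filter Q).card := by
  rw [← Finset.univ_product_univ, Finset.filter_product, Finset.card_product]

open scoped Classical in
/-- Error bound for the three-part universal minimum-description decoder under
random binning. The decoding metric is
`u(x,y) = min {R_x − ℓ_{x|y}(x,y)/k, R_y − ℓ_{y|x}(x,y)/k, R_x + R_y − ℓ_J(x,y)/k}`,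
and the probability (under independent uniformly random binnings) that some
`(x̃, ỹ) ≠ (x₀, y₀)` consistent with both bins has `u(x̃, ỹ) ≥ u(x₀, y₀)`
is at most `6 · 2^{−k·ε₀}`. -/
theorem universal_decoder_error_bound (X Y : Type*) [Fintype X] [Fintype Y]
    (k : ℕ) (hk : 1 ≤ k) (Rx Ry ε₀ : ℝ)
    (hRx : 0 < Rx) (hRy : 0 < Ry) (hε₀ : 0 < ε₀)
    (ℓJ ℓxy ℓyx : X × Y → ℕ)
    (hJ : ∀ l : ℕ, (Finset.univ.filter fun p : X × Y => ℓJ p = l).card ≤ 2 ^ l)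
    (hxy : ∀ (y : Y) (l : ℕ),
      (Finset.univ.filter fun x : X => ℓxy (x, y) = l).card ≤ 2 ^ l)
    (hyx : ∀ (x : X) (l : ℕ),
      (Finset.univ.filter fun y : Y => ℓyx (x, y) = l).card ≤ 2 ^ l)
    (u : X × Y → ℝ)
    (hu : ∀ p : X × Y, u p =
      min (Rx - (ℓxy p : ℝ) / k)
        (min (Ry - (ℓyx p : ℝ) / k) (Rx + Ry - (ℓJ p : ℝ) / k)))
    (x₀ : X) (y₀ : Y) (hu₀ : ε₀ ≤ u (x₀, y₀)) (Mx My : ℕ)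
    (hMx : (2 : ℝ) ^ ((k : ℝ) * Rx) ≤ (Mx : ℝ))
    (hMy : (2 : ℝ) ^ ((k : ℝ) * Ry) ≤ (My : ℝ)) :
    ((Finset.univ.filter fun φ : (X → Fin Mx) × (Y → Fin My) =>
        ∃ p : X × Y, p ≠ (x₀, y₀) ∧ φ.1 p.1 = φ.1 x₀ ∧ φ.2 p.2 = φ.2 y₀ ∧
          u (x₀, y₀) ≤ u p).card : ℝ) /
      (Fintype.card ((X → Fin Mx) × (Y → Fin My))) ≤
      6 * (2 : ℝ) ^ (-(k : ℝ) * ε₀) := by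
  classical
  have hk' : (0:ℝ) < k := by exact_mod_cast hk
  have hMx0 : (0:ℝ) < Mx := lt_of_lt_of_le (Real.rpow_pos_of_pos two_pos _) hMx
  have hMy0 : (0:ℝ) < My := lt_of_lt_of_le (Real.rpow_pos_of_pos two_pos _) hMy
  set nX := Fintype.card X with hnXdef
  set nY := Fintype.card Y with hnYdef
  have hnX : 1 ≤ nX := Fintype.card_pos_iff.mpr ⟨x₀⟩
  have hnY : 1 ≤ nY := Fintype.card_pos_iff.mpr ⟨y₀⟩
  -- key consequences of hu₀
  have hu0J : ε₀ ≤ Rx + Ry - (ℓJ (x₀,y₀) : ℝ) / k := by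
    have := hu (x₀, y₀); rw [this] at hu₀
    exact hu₀.trans ((min_le_right _ _).trans (min_le_right _ _))
  have hu0x : ε₀ ≤ Rx - (ℓxy (x₀,y₀) : ℝ) / k := by
    have := hu (x₀, y₀); rw [this] at hu₀
    exact hu₀.trans (min_le_left _ _)
  have hu0y : ε₀ ≤ Ry - (ℓyx (x₀,y₀) : ℝ) / k := by
    have := hu (x₀, y₀); rw [this] at hu₀
    exact hu₀.trans ((min_le_right _ _).trans (min_le_left _ _))
  have hεRx : ε₀ ≤ Rx := hu0x.trans (by
    have : (0:ℝ) ≤ (ℓxy (x₀,y₀) : ℝ) / k := by positivity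
    linarith)
  have hεRy : ε₀ ≤ Ry := hu0y.trans (by
    have : (0:ℝ) ≤ (ℓyx (x₀,y₀) : ℝ) / k := by positivity
    linarith)
  -- the three bad sets
  set S₁ : Finset X := Finset.univ.filter fun x => x ≠ x₀ ∧ u (x₀,y₀) ≤ u (x, y₀) with hS₁def
  set S₂ : Finset Y := Finset.univ.filter fun y => y ≠ y₀ ∧ u (x₀,y₀) ≤ u (x₀, y) with hS₂def
  set S₃ : Finset (X × Y) := Finset.univ.filter
    fun p => p.1 ≠ x₀ ∧ p.2 ≠ y₀ ∧ u (x₀,y₀) ≤ u p with hS₃def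
  -- counting bounds on the bad sets
  have hS1 : (S₁.card : ℝ) ≤ 2 * (2:ℝ) ^ ((k:ℝ) * (Rx - ε₀)) := by
    refine length_count_bound (fun x => ℓxy (x, y₀)) (hxy y₀) _ (by
      have : (0:ℝ) ≤ Rx - ε₀ := by linarith
      positivity) _ ?_
    intro x hx
    rw [hS₁def, Finset.mem_filter] at hx
    have h1 : ε₀ ≤ u (x, y₀) := hu₀.trans hx.2.2
    rw [hu (x, y₀)] at h1
    have h2 : ε₀ ≤ Rx - (ℓxy (x, y₀) : ℝ) / k := h1.trans (min_le_left _ _)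
    have h3 : (ℓxy (x, y₀) : ℝ) ≤ (Rx - ε₀) * k := by
      rw [← div_le_iff₀ hk']; linarith
    simpa [mul_comm] using h3
  have hS2 : (S₂.card : ℝ) ≤ 2 * (2:ℝ) ^ ((k:ℝ) * (Ry - ε₀)) := by
    refine length_count_bound (fun y => ℓyx (x₀, y)) (hyx x₀) _ (by
      have : (0:ℝ) ≤ Ry - ε₀ := by linarith
      positivity) _ ?_
    intro y hy
    rw [hS₂def, Finset.mem_filter] at hy
    have h1 : ε₀ ≤ u (x₀, y) := hu₀.trans hy.2.2
    rw [hu (x₀, y)] at h1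
    have h2 : ε₀ ≤ Ry - (ℓyx (x₀, y) : ℝ) / k :=
      h1.trans ((min_le_right _ _).trans (min_le_left _ _))
    have h3 : (ℓyx (x₀, y) : ℝ) ≤ (Ry - ε₀) * k := by
      rw [← div_le_iff₀ hk']; linarith
    simpa [mul_comm] using h3
  have hS3 : (S₃.card : ℝ) ≤ 2 * (2:ℝ) ^ ((k:ℝ) * (Rx + Ry - ε₀)) := by
    refine length_count_bound ℓJ hJ _ (by
      have : (0:ℝ) ≤ Rx + Ry - ε₀ := by linarith
      positivity) _ ?_
    intro p hp
    rw [hS₃def, Finset.mem_filter] at hp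
    have h1 : ε₀ ≤ u p := hu₀.trans hp.2.2.2
    rw [hu p] at h1
    have h2 : ε₀ ≤ Rx + Ry - (ℓJ p : ℝ) / k :=
      h1.trans ((min_le_right _ _).trans (min_le_right _ _))
    have h3 : (ℓJ p : ℝ) ≤ (Rx + Ry - ε₀) * k := by
      rw [← div_le_iff₀ hk']; linarith
    simpa [mul_comm] using h3
  -- union bound on the error event
  set E := Finset.univ.filter fun φ : (X → Fin Mx) × (Y → Fin My) =>
      ∃ p : X × Y, p ≠ (x₀, y₀) ∧ φ.1 p.1 = φ.1 x₀ ∧ φ.2 p.2 = φ.2 y₀ ∧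
        u (x₀, y₀) ≤ u p with hEdef
  set B₁ := S₁.biUnion (fun x => Finset.univ.filter
      fun φ : (X → Fin Mx) × (Y → Fin My) => φ.1 x = φ.1 x₀) with hB₁def
  set B₂ := S₂.biUnion (fun y => Finset.univ.filter
      fun φ : (X → Fin Mx) × (Y → Fin My) => φ.2 y = φ.2 y₀) with hB₂def
  set B₃ := S₃.biUnion (fun p => Finset.univ.filter
      fun φ : (X → Fin Mx) × (Y → Fin My) =>
        φ.1 p.1 = φ.1 x₀ ∧ φ.2 p.2 = φ.2 y₀) with hB₃def
  have hEsub : E ⊆ B₁ ∪ B₂ ∪ B₃ := by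
    intro φ hφ
    rw [hEdef, Finset.mem_filter] at hφ
    obtain ⟨-, p, hpne, hpx, hpy, hpu⟩ := hφ
    simp only [Finset.mem_union, hB₁def, hB₂def, hB₃def, Finset.mem_biUnion,
      Finset.mem_filter, Finset.mem_univ, true_and]
    by_cases h1 : p.1 = x₀
    · by_cases h2 : p.2 = y₀
      · exact absurd (Prod.ext_iff.mpr ⟨h1, h2⟩) hpne
      · refine Or.inl (Or.inr ⟨p.2, ?_, hpy⟩)
        rw [hS₂def, Finset.mem_filter]
        refine ⟨Finset.mem_univ _, h2, ?_⟩
        have hpp : (x₀, p.2) = p := by rw [← h1]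
        rwa [hpp]
    · by_cases h2 : p.2 = y₀
      · refine Or.inl (Or.inl ⟨p.1, ?_, hpx⟩)
        rw [hS₁def, Finset.mem_filter]
        refine ⟨Finset.mem_univ _, h1, ?_⟩
        have hpp : (p.1, y₀) = p := by rw [← h2]
        rwa [hpp]
      · refine Or.inr ⟨p, ?_, hpx, hpy⟩
        rw [hS₃def, Finset.mem_filter]
        exact ⟨Finset.mem_univ _, h1, h2, hpu⟩
  -- cardinalities of the collision events
  have hcard1 : ∀ x ∈ S₁, (Finset.univ.filter
      fun φ : (X → Fin Mx) × (Y → Fin My) => φ.1 x = φ.1 x₀).card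
        = Mx ^ (nX - 1) * My ^ nY := by
    intro x hx
    rw [hS₁def, Finset.mem_filter] at hx
    have heq : (Finset.univ.filter
        fun φ : (X → Fin Mx) × (Y → Fin My) => φ.1 x = φ.1 x₀)
        = Finset.univ.filter fun φ : (X → Fin Mx) × (Y → Fin My) =>
            (fun f : X → Fin Mx => f x = f x₀) φ.1 ∧ (fun _ : Y → Fin My => True) φ.2 := by
      apply Finset.filter_congr; intro φ _; simp
    rw [heq]
    refine (filter_prod_card (fun f : X → Fin Mx => f x = f x₀)
      (fun _ : Y → Fin My => True)).trans ?_
    rw [collision_card Mx hx.2.1]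
    congr 1
    rw [Finset.filter_true_of_mem (fun _ _ => trivial), Finset.card_univ,
      Fintype.card_fun, Fintype.card_fin]
  have hcard2 : ∀ y ∈ S₂, (Finset.univ.filter
      fun φ : (X → Fin Mx) × (Y → Fin My) => φ.2 y = φ.2 y₀).card
        = Mx ^ nX * My ^ (nY - 1) := by
    intro y hy
    rw [hS₂def, Finset.mem_filter] at hy
    have heq : (Finset.univ.filter
        fun φ : (X → Fin Mx) × (Y → Fin My) => φ.2 y = φ.2 y₀)
        = Finset.univ.filter fun φ : (X → Fin Mx) × (Y → Fin My) =>
            (fun _ : X → Fin Mx => True) φ.1 ∧ (fun g : Y → Fin My => g y = g y₀) φ.2 := by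
      apply Finset.filter_congr; intro φ _; simp
    rw [heq]
    refine (filter_prod_card (fun _ : X → Fin Mx => True)
      (fun g : Y → Fin My => g y = g y₀)).trans ?_
    rw [collision_card My hy.2.1]
    congr 1
    rw [Finset.filter_true_of_mem (fun _ _ => trivial), Finset.card_univ,
      Fintype.card_fun, Fintype.card_fin]
  have hcard3 : ∀ p ∈ S₃, (Finset.univ.filter
      fun φ : (X → Fin Mx) × (Y → Fin My) =>
        φ.1 p.1 = φ.1 x₀ ∧ φ.2 p.2 = φ.2 y₀).card
        = Mx ^ (nX - 1) * My ^ (nY - 1) := by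
    intro p hp
    rw [hS₃def, Finset.mem_filter] at hp
    have heq : (Finset.univ.filter
        fun φ : (X → Fin Mx) × (Y → Fin My) => φ.1 p.1 = φ.1 x₀ ∧ φ.2 p.2 = φ.2 y₀)
        = Finset.univ.filter fun φ : (X → Fin Mx) × (Y → Fin My) =>
            (fun f : X → Fin Mx => f p.1 = f x₀) φ.1 ∧
              (fun g : Y → Fin My => g p.2 = g y₀) φ.2 := rfl
    rw [heq]
    refine (filter_prod_card (fun f : X → Fin Mx => f p.1 = f x₀)
      (fun g : Y → Fin My => g p.2 = g y₀)).trans ?_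
    rw [collision_card Mx hp.2.1, collision_card My hp.2.2.1]
  have hB1 : B₁.card ≤ S₁.card * (Mx ^ (nX - 1) * My ^ nY) :=
    Finset.card_biUnion_le_card_mul _ _ _ (fun x hx => le_of_eq (hcard1 x hx))
  have hB2 : B₂.card ≤ S₂.card * (Mx ^ nX * My ^ (nY - 1)) :=
    Finset.card_biUnion_le_card_mul _ _ _ (fun y hy => le_of_eq (hcard2 y hy))
  have hB3 : B₃.card ≤ S₃.card * (Mx ^ (nX - 1) * My ^ (nY - 1)) :=
    Finset.card_biUnion_le_card_mul _ _ _ (fun p hp => le_of_eq (hcard3 p hp))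
  have hE : E.card ≤ S₁.card * (Mx ^ (nX - 1) * My ^ nY)
      + S₂.card * (Mx ^ nX * My ^ (nY - 1))
      + S₃.card * (Mx ^ (nX - 1) * My ^ (nY - 1)) := by
    calc E.card ≤ (B₁ ∪ B₂ ∪ B₃).card := Finset.card_le_card hEsub
      _ ≤ (B₁ ∪ B₂).card + B₃.card := Finset.card_union_le _ _
      _ ≤ B₁.card + B₂.card + B₃.card := by
          have := Finset.card_union_le B₁ B₂; omega
      _ ≤ _ := Nat.add_le_add (Nat.add_le_add hB1 hB2) hB3
  -- pass to the reals
  have hcardΩ : (Fintype.card ((X → Fin Mx) × (Y → Fin My)) : ℝ)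
      = (Mx:ℝ) ^ nX * (My:ℝ) ^ nY := by
    rw [Fintype.card_prod, Fintype.card_fun, Fintype.card_fun,
      Fintype.card_fin, Fintype.card_fin]
    push_cast; ring
  have hpx : (Mx:ℝ) ^ (nX - 1) * Mx = (Mx:ℝ) ^ nX := by
    rw [← pow_succ, Nat.sub_add_cancel hnX]
  have hpy : (My:ℝ) ^ (nY - 1) * My = (My:ℝ) ^ nY := by
    rw [← pow_succ, Nat.sub_add_cancel hnY]
  set t : ℝ := (2:ℝ) ^ (-(k : ℝ) * ε₀) with htdef
  have ht0 : 0 < t := Real.rpow_pos_of_pos two_pos _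
  -- combine the rpow bounds with hMx, hMy
  have hr1 : 2 * (2:ℝ) ^ ((k:ℝ) * (Rx - ε₀)) ≤ 2 * t * Mx := by
    have : (2:ℝ) ^ ((k:ℝ) * (Rx - ε₀)) = (2:ℝ) ^ ((k:ℝ) * Rx) * t := by
      rw [htdef, ← Real.rpow_add two_pos]; ring_nf
    rw [this]
    calc (2:ℝ) * ((2:ℝ) ^ ((k:ℝ) * Rx) * t) ≤ 2 * ((Mx:ℝ) * t) := by gcongr
      _ = 2 * t * Mx := by ring
  have hr2 : 2 * (2:ℝ) ^ ((k:ℝ) * (Ry - ε₀)) ≤ 2 * t * My := by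
    have : (2:ℝ) ^ ((k:ℝ) * (Ry - ε₀)) = (2:ℝ) ^ ((k:ℝ) * Ry) * t := by
      rw [htdef, ← Real.rpow_add two_pos]; ring_nf
    rw [this]
    calc (2:ℝ) * ((2:ℝ) ^ ((k:ℝ) * Ry) * t) ≤ 2 * ((My:ℝ) * t) := by gcongr
      _ = 2 * t * My := by ring
  have hr3 : 2 * (2:ℝ) ^ ((k:ℝ) * (Rx + Ry - ε₀)) ≤ 2 * t * (Mx * My) := by
    have : (2:ℝ) ^ ((k:ℝ) * (Rx + Ry - ε₀))
        = (2:ℝ) ^ ((k:ℝ) * Rx) * (2:ℝ) ^ ((k:ℝ) * Ry) * t := by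
      rw [htdef, ← Real.rpow_add two_pos, ← Real.rpow_add two_pos]; ring_nf
    rw [this]
    calc (2:ℝ) * ((2:ℝ) ^ ((k:ℝ) * Rx) * (2:ℝ) ^ ((k:ℝ) * Ry) * t)
        ≤ 2 * ((Mx:ℝ) * (My:ℝ) * t) := by gcongr
      _ = 2 * t * (Mx * My) := by ring
  have hS1' : (S₁.card : ℝ) ≤ 2 * t * Mx := hS1.trans hr1
  have hS2' : (S₂.card : ℝ) ≤ 2 * t * My := hS2.trans hr2
  have hS3' : (S₃.card : ℝ) ≤ 2 * t * (Mx * My) := hS3.trans hr3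
  rw [hcardΩ, div_le_iff₀ (by positivity)]
  have hE' : (E.card : ℝ) ≤ (S₁.card : ℝ) * ((Mx:ℝ) ^ (nX - 1) * (My:ℝ) ^ nY)
      + (S₂.card : ℝ) * ((Mx:ℝ) ^ nX * (My:ℝ) ^ (nY - 1))
      + (S₃.card : ℝ) * ((Mx:ℝ) ^ (nX - 1) * (My:ℝ) ^ (nY - 1)) := by
    exact_mod_cast hE
  calc (E.card : ℝ)
      ≤ (S₁.card : ℝ) * ((Mx:ℝ) ^ (nX - 1) * (My:ℝ) ^ nY)
        + (S₂.card : ℝ) * ((Mx:ℝ) ^ nX * (My:ℝ) ^ (nY - 1))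
        + (S₃.card : ℝ) * ((Mx:ℝ) ^ (nX - 1) * (My:ℝ) ^ (nY - 1)) := hE'
    _ ≤ (2 * t * Mx) * ((Mx:ℝ) ^ (nX - 1) * (My:ℝ) ^ nY)
        + (2 * t * My) * ((Mx:ℝ) ^ nX * (My:ℝ) ^ (nY - 1))
        + (2 * t * (Mx * My)) * ((Mx:ℝ) ^ (nX - 1) * (My:ℝ) ^ (nY - 1)) := by
        gcongr <;> positivity
    _ = 6 * t * ((Mx:ℝ) ^ nX * (My:ℝ) ^ nY) := by
        rw [← hpx, ← hpy]; ring
end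

section
/- Error bound for incremental Slepian-Wolf decoding before either marginal description is complete (case with both sources still being transmitted): Let X and Y be finite sets, (x₀,y₀) ∈ X × Y, and let ℓ_J : X × Y → ℕ be a lossless length function (|{(x,y) : ℓ_J(x,y) = l}| ≤ 2^l for every natural number l). Let k ≥ 1 and m ≥ 1 be integers, let r_x, r_y > 0 and ε > 0 be reals, and let L_x, L_y ≥ 0 be reals with m·r_x ≤ L_x and m·r_y ≤ L_y. Set θ = ((L_x − m·r_x) + (L_y − m·r_y))/k + ε. Let φ_x : X → Fin 2^{⌊m·r_x⌋} and φ_y : Y → Fin 2^{⌊m·r_y⌋} be independent uniformly random functions. Then the probability that there exists a pair (x̃,ỹ) with x̃ ≠ x₀, ỹ ≠ y₀, ℓ_J(x̃,ỹ) ≤ L_x + L_y − k·θ, φ_x(x̃) = φ_x(x₀), and φ_y(ỹ) = φ_y(y₀) is at most 8·2^{−k·ε}. -/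
open Finset in
private lemma sw_sum_two_pow_lt (n : ℕ) : ∑ l ∈ Finset.range n, 2 ^ l < 2 ^ n := by
  induction n with
  | zero => simp
  | succ n ih => rw [Finset.sum_range_succ, pow_succ]; omega

open Finset in
private lemma sw_count_collide {X : Type*} [Fintype X] [DecidableEq X] (N : ℕ) (x x₀ : X)
    (h : x ≠ x₀) :
    (Finset.univ.filter fun φ : X → Fin N => φ x = φ x₀).card * N = N ^ Fintype.card X := by
  classical
  have h2 : ((Finset.univ.filter fun φ : X → Fin N => φ x = φ x₀)
      ×ˢ (Finset.univ : Finset (Fin N))).card = Fintype.card (X → Fin N) := by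
    rw [← Finset.card_univ]
    refine Finset.card_bij' (fun p _ => Function.update p.1 x p.2)
      (fun ψ _ => (Function.update ψ x (ψ x₀), ψ x)) ?_ ?_ ?_ ?_
    · intros; exact Finset.mem_univ _
    · intro ψ _
      simp only [Finset.mem_product, Finset.mem_filter, Finset.mem_univ, true_and, and_true]
      rw [Function.update_self, Function.update_of_ne (Ne.symm h)]
    · rintro ⟨φ, v⟩ ha
      simp only [Finset.mem_product, Finset.mem_filter, Finset.mem_univ, true_and,
        and_true] at ha
      have hx0 : Function.update φ x v x₀ = φ x₀ := Function.update_of_ne (Ne.symm h) _ _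
      dsimp only
      simp only [hx0, Function.update_self, Prod.mk.injEq]
      refine ⟨by rw [Function.update_idem, ← ha, Function.update_eq_self], ?_⟩
      trivial
    · intro ψ _
      dsimp only
      rw [Function.update_idem, Function.update_eq_self]
  rw [Finset.card_product, Finset.card_univ, Fintype.card_fin] at h2
  rw [h2, Fintype.card_fun, Fintype.card_fin]

open scoped Classical in
/-- Error bound for incremental Slepian-Wolf decoding while both sources are
still being transmitted: with `θ = ((L_x − m·r_x) + (L_y − m·r_y))/k + ε` and
independent uniformly random binnings `φ_x : X → Fin 2^⌊m·r_x⌋`,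
`φ_y : Y → Fin 2^⌊m·r_y⌋`, the probability that some pair `(x̃, ỹ)` with
`x̃ ≠ x₀`, `ỹ ≠ y₀` and `ℓ_J (x̃, ỹ) ≤ L_x + L_y − k·θ` collides with
`(x₀, y₀)` in both bins is at most `8 · 2^{−k·ε}`. -/
theorem incremental_sw_error_joint (X Y : Type*) [Fintype X] [Fintype Y]
    (x₀ : X) (y₀ : Y) (ℓJ : X × Y → ℕ)
    (hℓJ : ∀ l : ℕ, (Finset.univ.filter fun p : X × Y => ℓJ p = l).card ≤ 2 ^ l)
    (k m : ℕ) (hk : 1 ≤ k) (hm : 1 ≤ m) (rx ry ε Lx Ly : ℝ)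
    (hrx : 0 < rx) (hry : 0 < ry) (hε : 0 < ε) (hLx : 0 ≤ Lx) (hLy : 0 ≤ Ly)
    (hmx : (m : ℝ) * rx ≤ Lx) (hmy : (m : ℝ) * ry ≤ Ly)
    (θ : ℝ) (hθ : θ = ((Lx - m * rx) + (Ly - m * ry)) / k + ε) :
    ((Finset.univ.filter
        fun φ : (X → Fin (2 ^ ⌊(m : ℝ) * rx⌋₊)) × (Y → Fin (2 ^ ⌊(m : ℝ) * ry⌋₊)) =>
        ∃ x : X, ∃ y : Y, x ≠ x₀ ∧ y ≠ y₀ ∧ (ℓJ (x, y) : ℝ) ≤ Lx + Ly - k * θ ∧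
          φ.1 x = φ.1 x₀ ∧ φ.2 y = φ.2 y₀).card : ℝ) /
      (Fintype.card
        ((X → Fin (2 ^ ⌊(m : ℝ) * rx⌋₊)) × (Y → Fin (2 ^ ⌊(m : ℝ) * ry⌋₊)))) ≤
      8 * (2 : ℝ) ^ (-(k : ℝ) * ε) := by
  classical
  set N1 : ℕ := 2 ^ ⌊(m : ℝ) * rx⌋₊ with hN1
  set N2 : ℕ := 2 ^ ⌊(m : ℝ) * ry⌋₊ with hN2
  set Φ := (X → Fin N1) × (Y → Fin N2)
  set bigE : Finset Φ := Finset.univ.filter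
      (fun φ : Φ =>
        ∃ x : X, ∃ y : Y, x ≠ x₀ ∧ y ≠ y₀ ∧ (ℓJ (x, y) : ℝ) ≤ Lx + Ly - k * θ ∧
          φ.1 x = φ.1 x₀ ∧ φ.2 y = φ.2 y₀) with hbigE
  set S : Finset (X × Y) := Finset.univ.filter
      (fun p : X × Y => p.1 ≠ x₀ ∧ p.2 ≠ y₀ ∧ (ℓJ p : ℝ) ≤ Lx + Ly - k * θ) with hSdef
  set T : ℕ := Fintype.card Φ with hT
  have hkR : (0:ℝ) < k := by exact_mod_cast hk
  have hTval : T = N1 ^ Fintype.card X * N2 ^ Fintype.card Y := by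
    rw [hT, Fintype.card_prod, Fintype.card_fun, Fintype.card_fun, Fintype.card_fin,
      Fintype.card_fin]
  have hTpos : (0:ℝ) < T := by
    rw [hTval]; positivity
  have hN1pos : (0:ℝ) < N1 := by positivity
  have hN2pos : (0:ℝ) < N2 := by positivity
  -- union bound
  have hsub : bigE ⊆ S.biUnion (fun p => Finset.univ.filter
      (fun φ : Φ => φ.1 p.1 = φ.1 x₀ ∧ φ.2 p.2 = φ.2 y₀)) := by
    intro φ hφ
    rw [hbigE, Finset.mem_filter] at hφ
    obtain ⟨-, x, y, hx, hy, hl, h1, h2⟩ := hφ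
    refine Finset.mem_biUnion.2 ⟨(x, y), ?_, ?_⟩
    · rw [hSdef, Finset.mem_filter]; exact ⟨Finset.mem_univ _, hx, hy, hl⟩
    · rw [Finset.mem_filter]; exact ⟨Finset.mem_univ _, h1, h2⟩
  -- each pairwise collision event has cardinality T / (N1 * N2)
  have hterm : ∀ p ∈ S,
      ((Finset.univ.filter
        (fun φ : Φ => φ.1 p.1 = φ.1 x₀ ∧ φ.2 p.2 = φ.2 y₀)).card : ℝ)
        = (T : ℝ) / ((N1 : ℝ) * N2) := by
    rintro ⟨x, y⟩ hp
    rw [hSdef, Finset.mem_filter] at hp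
    obtain ⟨-, hx, hy, -⟩ := hp
    have hfac : (Finset.univ.filter
        (fun φ : Φ => φ.1 x = φ.1 x₀ ∧ φ.2 y = φ.2 y₀))
        = (Finset.univ.filter (fun φ1 : X → Fin N1 => φ1 x = φ1 x₀)) ×ˢ
          (Finset.univ.filter (fun φ2 : Y → Fin N2 => φ2 y = φ2 y₀)) := by
      rw [← Finset.filter_product, Finset.univ_product_univ]
    rw [hfac, Finset.card_product]
    have c1 := sw_count_collide N1 x x₀ hx
    have c2 := sw_count_collide N2 y y₀ hy
    rw [eq_div_iff (by positivity)]
    push_cast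
    have c1' : ((Finset.univ.filter (fun φ1 : X → Fin N1 => φ1 x = φ1 x₀)).card : ℝ) * N1
        = (N1:ℝ) ^ Fintype.card X := by exact_mod_cast c1
    have c2' : ((Finset.univ.filter (fun φ2 : Y → Fin N2 => φ2 y = φ2 y₀)).card : ℝ) * N2
        = (N2:ℝ) ^ Fintype.card Y := by exact_mod_cast c2
    calc ((Finset.univ.filter (fun φ1 : X → Fin N1 => φ1 x = φ1 x₀)).card : ℝ) *
          ((Finset.univ.filter (fun φ2 : Y → Fin N2 => φ2 y = φ2 y₀)).card : ℝ) *
          ((N1 : ℝ) * N2)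
        = (((Finset.univ.filter (fun φ1 : X → Fin N1 => φ1 x = φ1 x₀)).card : ℝ) * N1) *
          (((Finset.univ.filter (fun φ2 : Y → Fin N2 => φ2 y = φ2 y₀)).card : ℝ) * N2) := by
          ring
      _ = (N1:ℝ) ^ Fintype.card X * (N2:ℝ) ^ Fintype.card Y := by rw [c1', c2']
      _ = (T : ℝ) := by rw [hTval]; push_cast; ring
  have hcard1 : (bigE.card : ℝ) ≤ (S.card : ℝ) * ((T : ℝ) / ((N1:ℝ) * N2)) := by
    calc (bigE.card : ℝ) ≤ ((S.biUnion (fun p => Finset.univ.filter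
        (fun φ : Φ => φ.1 p.1 = φ.1 x₀ ∧ φ.2 p.2 = φ.2 y₀))).card : ℝ) := by
          exact_mod_cast Finset.card_le_card hsub
      _ ≤ ∑ p ∈ S, ((Finset.univ.filter
          (fun φ : Φ => φ.1 p.1 = φ.1 x₀ ∧ φ.2 p.2 = φ.2 y₀)).card : ℝ) := by
          exact_mod_cast Finset.card_biUnion_le
      _ = ∑ p ∈ S, (T : ℝ) / ((N1:ℝ) * N2) := Finset.sum_congr rfl hterm
      _ = (S.card : ℝ) * ((T : ℝ) / ((N1:ℝ) * N2)) := by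
          rw [Finset.sum_const, nsmul_eq_mul]
  -- it suffices to bound S.card / (N1 * N2)
  have hmain : (bigE.card : ℝ) / T ≤ (S.card : ℝ) / ((N1:ℝ) * N2) := by
    rw [div_le_div_iff₀ hTpos (by positivity)]
    calc (bigE.card : ℝ) * ((N1:ℝ) * N2)
        ≤ (S.card : ℝ) * ((T : ℝ) / ((N1:ℝ) * N2)) * ((N1:ℝ) * N2) := by
          gcongr
      _ = (S.card : ℝ) * T := by field_simp
  refine hmain.trans ?_
  -- the threshold
  have hB : Lx + Ly - k * θ = (m:ℝ) * rx + (m:ℝ) * ry - k * ε := by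
    rw [hθ]; field_simp; ring
  set B : ℝ := Lx + Ly - k * θ with hBdef
  by_cases hB0 : 0 ≤ B
  · -- main case : count S
    have hScount : S.card ≤ 2 ^ (⌊B⌋₊ + 1) := by
      have hsub2 : S ⊆ (Finset.range (⌊B⌋₊ + 1)).biUnion
          (fun l => Finset.univ.filter (fun p : X × Y => ℓJ p = l)) := by
        intro p hp
        rw [hSdef, Finset.mem_filter] at hp
        obtain ⟨-, -, -, hl⟩ := hp
        refine Finset.mem_biUnion.2 ⟨ℓJ p, ?_, by simp⟩
        rw [Finset.mem_range, Nat.lt_succ_iff]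
        exact Nat.le_floor hl
      calc S.card ≤ ∑ l ∈ Finset.range (⌊B⌋₊ + 1),
            (Finset.univ.filter (fun p : X × Y => ℓJ p = l)).card :=
            (Finset.card_le_card hsub2).trans Finset.card_biUnion_le
        _ ≤ ∑ l ∈ Finset.range (⌊B⌋₊ + 1), 2 ^ l :=
            Finset.sum_le_sum (fun l _ => hℓJ l)
        _ ≤ 2 ^ (⌊B⌋₊ + 1) := (sw_sum_two_pow_lt _).le
    have hSreal : (S.card : ℝ) ≤ 2 * (2:ℝ) ^ B := by
      calc (S.card : ℝ) ≤ ((2:ℝ)) ^ (⌊B⌋₊ + 1 : ℕ) := by exact_mod_cast hScount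
        _ = 2 * (2:ℝ) ^ ((⌊B⌋₊ : ℝ)) := by
            rw [Real.rpow_natCast, pow_succ]; ring
        _ ≤ 2 * (2:ℝ) ^ B := by
            gcongr
            · norm_num
            · exact Nat.floor_le hB0
    have hN1ge : (2:ℝ) ^ ((m:ℝ) * rx - 1) ≤ (N1 : ℝ) := by
      have : ((N1 : ℕ) : ℝ) = (2:ℝ) ^ ((⌊(m : ℝ) * rx⌋₊ : ℝ)) := by
        rw [hN1, Real.rpow_natCast]; push_cast; ring
      rw [this]
      exact Real.rpow_le_rpow_of_exponent_le one_le_two (Nat.sub_one_lt_floor _).le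
    have hN2ge : (2:ℝ) ^ ((m:ℝ) * ry - 1) ≤ (N2 : ℝ) := by
      have : ((N2 : ℕ) : ℝ) = (2:ℝ) ^ ((⌊(m : ℝ) * ry⌋₊ : ℝ)) := by
        rw [hN2, Real.rpow_natCast]; push_cast; ring
      rw [this]
      exact Real.rpow_le_rpow_of_exponent_le one_le_two (Nat.sub_one_lt_floor _).le
    have hkey : 8 * (2:ℝ) ^ (-(k : ℝ) * ε) *
        ((2:ℝ) ^ ((m:ℝ) * rx - 1) * (2:ℝ) ^ ((m:ℝ) * ry - 1)) = 2 * (2:ℝ) ^ B := by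
      have h8 : (8:ℝ) = (2:ℝ) ^ (3:ℝ) := by
        rw [show (3:ℝ) = ((3:ℕ):ℝ) by norm_num, Real.rpow_natCast]; norm_num
      calc 8 * (2:ℝ) ^ (-(k : ℝ) * ε) *
            ((2:ℝ) ^ ((m:ℝ) * rx - 1) * (2:ℝ) ^ ((m:ℝ) * ry - 1))
          = (2:ℝ) ^ (3:ℝ) * (2:ℝ) ^ (-(k : ℝ) * ε) *
            ((2:ℝ) ^ ((m:ℝ) * rx - 1) * (2:ℝ) ^ ((m:ℝ) * ry - 1)) := by rw [← h8]
        _ = (2:ℝ) ^ ((3:ℝ) + -(k : ℝ) * ε) *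
            ((2:ℝ) ^ (((m:ℝ) * rx - 1) + ((m:ℝ) * ry - 1))) := by
            rw [← Real.rpow_add two_pos, ← Real.rpow_add two_pos]
        _ = (2:ℝ) ^ (((3:ℝ) + -(k : ℝ) * ε) + (((m:ℝ) * rx - 1) + ((m:ℝ) * ry - 1))) := by
            rw [← Real.rpow_add two_pos]
        _ = (2:ℝ) ^ ((1:ℝ) + B) := by rw [hB]; ring_nf
        _ = 2 * (2:ℝ) ^ B := by rw [Real.rpow_add two_pos, Real.rpow_one]
    rw [div_le_iff₀ (by positivity)]
    calc (S.card : ℝ) ≤ 2 * (2:ℝ) ^ B := hSreal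
      _ = 8 * (2:ℝ) ^ (-(k : ℝ) * ε) *
          ((2:ℝ) ^ ((m:ℝ) * rx - 1) * (2:ℝ) ^ ((m:ℝ) * ry - 1)) := hkey.symm
      _ ≤ 8 * (2:ℝ) ^ (-(k : ℝ) * ε) * ((N1:ℝ) * N2) := by gcongr
  · -- threshold negative : S is empty
    have hSempty : S = ∅ := by
      rw [hSdef, Finset.filter_eq_empty_iff]
      rintro ⟨x, y⟩ -
      rintro ⟨-, -, hl⟩
      exact hB0 (le_trans (by positivity) hl)
    rw [hSempty]
    simp only [Finset.card_empty, Nat.cast_zero, zero_div]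
    positivity
end

section
/- Error bound for incremental Slepian-Wolf decoding after one source has been fully decoded (case with only one source still being transmitted): Let Y be a finite set, y₀ ∈ Y, and let ℓ_c : Y → ℕ be a lossless length function (|{y ∈ Y : ℓ_c(y) = l}| ≤ 2^l for every natural number l). Let k ≥ 1 and m ≥ 1 be integers, let r_y > 0 and ε > 0 be reals, and let L_y ≥ 0 be a real with m·r_y ≤ L_y. Set θ = (L_y − m·r_y)/k + ε. Let φ_y : Y → Fin 2^{⌊m·r_y⌋} be a uniformly random function. Then the probability that there exists ỹ ∈ Y with ỹ ≠ y₀, ℓ_c(ỹ) ≤ L_y − k·θ, and φ_y(ỹ) = φ_y(y₀) is at most 4·2^{−k·ε}. -/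
open scoped Classical in
/-- Error bound for incremental Slepian-Wolf decoding after one source has been
fully decoded: with `θ = (L_y − m·r_y)/k + ε` and a uniformly random binning
`φ_y : Y → Fin 2^⌊m·r_y⌋`, the probability that some `ỹ ≠ y₀` with
`ℓ_c ỹ ≤ L_y − k·θ` falls in the bin of `y₀` is at most `4 · 2^{−k·ε}`. -/
theorem incremental_sw_error_single (Y : Type*) [Fintype Y] (y₀ : Y)
    (ℓc : Y → ℕ)
    (hℓc : ∀ l : ℕ, (Finset.univ.filter fun y => ℓc y = l).card ≤ 2 ^ l)
    (k m : ℕ) (hk : 1 ≤ k) (hm : 1 ≤ m) (ry ε Ly : ℝ)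
    (hry : 0 < ry) (hε : 0 < ε) (hLy : 0 ≤ Ly) (hmy : (m : ℝ) * ry ≤ Ly)
    (θ : ℝ) (hθ : θ = (Ly - m * ry) / k + ε) :
    ((Finset.univ.filter fun φ : Y → Fin (2 ^ ⌊(m : ℝ) * ry⌋₊) =>
        ∃ y : Y, y ≠ y₀ ∧ (ℓc y : ℝ) ≤ Ly - k * θ ∧ φ y = φ y₀).card : ℝ) /
      (Fintype.card (Y → Fin (2 ^ ⌊(m : ℝ) * ry⌋₊))) ≤
      4 * (2 : ℝ) ^ (-(k : ℝ) * ε) := by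
  classical
  set x : ℝ := (m : ℝ) * ry with hxdef
  have hxpos : 0 ≤ x := by positivity
  set M : ℕ := 2 ^ ⌊x⌋₊ with hMdef
  have hMpos : 0 < M := pow_pos (by norm_num) _
  set n : ℕ := Fintype.card Y with hndef
  have hcardfun : Fintype.card (Y → Fin M) = M ^ n := by
    simp [hndef]
  have hk0 : (k : ℝ) ≠ 0 := by
    have : (0 : ℝ) < k := by exact_mod_cast hk
    linarith
  have hT : Ly - (k : ℝ) * θ = x - k * ε := by
    rw [hθ]; field_simp; ring
  set B := Finset.univ.filter
    (fun y : Y => y ≠ y₀ ∧ (ℓc y : ℝ) ≤ Ly - k * θ) with hBdef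
  set Bad := Finset.univ.filter
    (fun φ : Y → Fin M => ∃ y : Y, y ≠ y₀ ∧ (ℓc y : ℝ) ≤ Ly - k * θ ∧ φ y = φ y₀)
    with hBaddef
  -- union bound
  have hsub : Bad ⊆ B.biUnion
      (fun y => Finset.univ.filter fun φ : Y → Fin M => φ y = φ y₀) := by
    intro φ hφ
    simp only [hBaddef, Finset.mem_filter, Finset.mem_univ, true_and] at hφ
    obtain ⟨y, h1, h2, h3⟩ := hφ
    exact Finset.mem_biUnion.mpr ⟨y, by simp [hBdef, h1, h2], by simp [h3]⟩
  -- for each y ≠ y₀, count of collisions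
  have key : ∀ y : Y, y ≠ y₀ →
      ((Finset.univ.filter fun φ : Y → Fin M => φ y = φ y₀).card) * M ≤ M ^ n := by
    intro y hy
    set S := (Finset.univ.filter fun φ : Y → Fin M => φ y = φ y₀) with hS
    have hinj : Set.InjOn (fun p : (Y → Fin M) × Fin M => Function.update p.1 y p.2)
        ((S ×ˢ (Finset.univ : Finset (Fin M)) : Finset _) : Set _) := by
      rintro ⟨φ, b⟩ hp ⟨ψ, c⟩ hq h
      have hpS : φ y = φ y₀ := by
        have := (Finset.mem_product.mp (Finset.mem_coe.mp hp)).1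
        simpa [hS] using this
      have hqS : ψ y = ψ y₀ := by
        have := (Finset.mem_product.mp (Finset.mem_coe.mp hq)).1
        simpa [hS] using this
      simp only at h
      have hb : b = c := by
        have := congrFun h y
        simpa using this
      have hy0 : φ y₀ = ψ y₀ := by
        have := congrFun h y₀
        simpa [Function.update_of_ne (Ne.symm hy)] using this
      have hφψ : φ = ψ := by
        funext i
        by_cases hi : i = y
        · subst hi
          rw [hpS, hy0, ← hqS]
        · have := congrFun h i
          simpa [Function.update_of_ne hi] using this
      simp [hφψ, hb]
    have hmap : ∀ p ∈ S ×ˢ (Finset.univ : Finset (Fin M)),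
        (fun p : (Y → Fin M) × Fin M => Function.update p.1 y p.2) p ∈
          (Finset.univ : Finset (Y → Fin M)) := fun _ _ => Finset.mem_univ _
    have := Finset.card_le_card_of_injOn _ hmap hinj
    simpa [Finset.card_product, Finset.card_univ, hcardfun] using this
  -- Bad.card * M ≤ B.card * M ^ n
  have hBadM : Bad.card * M ≤ B.card * M ^ n := by
    calc Bad.card * M
        ≤ (∑ y ∈ B, (Finset.univ.filter fun φ : Y → Fin M => φ y = φ y₀).card) * M := by
          exact Nat.mul_le_mul_right _
            ((Finset.card_le_card hsub).trans Finset.card_biUnion_le)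
      _ = ∑ y ∈ B, (Finset.univ.filter fun φ : Y → Fin M => φ y = φ y₀).card * M := by
          rw [Finset.sum_mul]
      _ ≤ ∑ _y ∈ B, M ^ n := by
          refine Finset.sum_le_sum fun y hy => ?_
          have hy' : y ≠ y₀ := by
            simp only [hBdef, Finset.mem_filter] at hy
            exact hy.2.1
          exact key y hy'
      _ = B.card * M ^ n := by rw [Finset.sum_const, smul_eq_mul]
  -- bound on B.card
  have hBreal : (B.card : ℝ) ≤ 2 * (2 : ℝ) ^ (x - k * ε) := by
    by_cases hTneg : Ly - (k : ℝ) * θ < 0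
    · have hBempty : B = ∅ := by
        rw [hBdef, Finset.filter_eq_empty_iff]
        intro y _
        rintro ⟨-, h2⟩
        have : (0 : ℝ) ≤ (ℓc y : ℝ) := Nat.cast_nonneg _
        linarith
      rw [hBempty]
      simp only [Finset.card_empty, Nat.cast_zero]
      positivity
    · push_neg at hTneg
      set T := Ly - (k : ℝ) * θ with hTdef
      have hsubB : B ⊆ (Finset.range (⌊T⌋₊ + 1)).biUnion
          (fun l => Finset.univ.filter fun y => ℓc y = l) := by
        intro y hy
        simp only [hBdef, Finset.mem_filter, Finset.mem_univ, true_and] at hy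
        exact Finset.mem_biUnion.mpr ⟨ℓc y,
          Finset.mem_range.mpr (Nat.lt_succ_of_le (Nat.le_floor hy.2)), by simp⟩
      have h1 : B.card ≤ ∑ l ∈ Finset.range (⌊T⌋₊ + 1), 2 ^ l :=
        (Finset.card_le_card hsubB).trans
          (Finset.card_biUnion_le.trans (Finset.sum_le_sum fun l _ => hℓc l))
      have h2 : (B.card : ℝ) ≤ 2 ^ (⌊T⌋₊ + 1) := by
        have h3 : (∑ l ∈ Finset.range (⌊T⌋₊ + 1), 2 ^ l) < 2 ^ (⌊T⌋₊ + 1) :=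
          Nat.geomSum_lt le_rfl (fun l hl => Finset.mem_range.mp hl)
        have := h1.trans h3.le
        exact_mod_cast this
      have h4 : (2 : ℝ) ^ (⌊T⌋₊ + 1) = 2 * (2 : ℝ) ^ (⌊T⌋₊ : ℕ) := by ring
      have h5 : (2 : ℝ) ^ (⌊T⌋₊ : ℕ) ≤ (2 : ℝ) ^ T := by
        rw [← Real.rpow_natCast 2 ⌊T⌋₊]
        exact Real.rpow_le_rpow_of_exponent_le one_le_two (Nat.floor_le hTneg)
      have hTx : T = x - k * ε := hT
      calc (B.card : ℝ) ≤ 2 ^ (⌊T⌋₊ + 1) := h2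
        _ = 2 * (2 : ℝ) ^ (⌊T⌋₊ : ℕ) := h4
        _ ≤ 2 * (2 : ℝ) ^ T := by linarith
        _ = 2 * (2 : ℝ) ^ (x - k * ε) := by rw [hTx]
  -- bound on M
  have hMreal : (2 : ℝ) ^ (x - 1) ≤ (M : ℝ) := by
    have h1 : x - 1 < (⌊x⌋₊ : ℝ) := Nat.sub_one_lt_floor x
    have h2 : (M : ℝ) = (2 : ℝ) ^ ((⌊x⌋₊ : ℕ) : ℝ) := by
      rw [Real.rpow_natCast, hMdef]
      push_cast
      ring
    rw [h2]
    exact Real.rpow_le_rpow_of_exponent_le one_le_two h1.le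
  -- put everything together
  have hMnpos : (0 : ℝ) < (M : ℝ) ^ n := by positivity
  have hMrpos : (0 : ℝ) < (M : ℝ) := by exact_mod_cast hMpos
  have step1 : (Bad.card : ℝ) / ((M : ℝ) ^ n) ≤ (B.card : ℝ) / M := by
    rw [div_le_div_iff₀ hMnpos hMrpos]
    exact_mod_cast hBadM
  have step2 : (B.card : ℝ) / M ≤ (2 * (2 : ℝ) ^ (x - k * ε)) / (2 : ℝ) ^ (x - 1) :=
    div_le_div₀ (by positivity) hBreal (by positivity) hMreal
  have step3 : (2 * (2 : ℝ) ^ (x - k * ε)) / (2 : ℝ) ^ (x - 1)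
      = 4 * (2 : ℝ) ^ (-(k : ℝ) * ε) := by
    rw [mul_div_assoc, ← Real.rpow_sub (by norm_num : (0:ℝ) < 2)]
    have : x - k * ε - (x - 1) = 1 + (-(k : ℝ) * ε) := by ring
    rw [this, Real.rpow_add (by norm_num : (0:ℝ) < 2), Real.rpow_one]
    ring
  have hgoal : (Bad.card : ℝ) / ((M : ℝ) ^ n) ≤ 4 * (2 : ℝ) ^ (-(k : ℝ) * ε) := by
    calc (Bad.card : ℝ) / ((M : ℝ) ^ n) ≤ (B.card : ℝ) / M := step1
      _ ≤ (2 * (2 : ℝ) ^ (x - k * ε)) / (2 : ℝ) ^ (x - 1) := step2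
      _ = 4 * (2 : ℝ) ^ (-(k : ℝ) * ε) := by rw [step3]
  have hcast : ((Fintype.card (Y → Fin M)) : ℝ) = (M : ℝ) ^ n := by
    rw [hcardfun]; push_cast; ring
  rw [hcast]
  exact hgoal
end
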